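/- arXiv:2302.06877 — 7 statements merged into one kernel-verified Lean document; each statement's English description precedes it below -/
import Mathlib

section
/- For all complex numbers a, b and real q > 2, Re{(|b|^{q-2}·conj(b) − |a|^{q-2}·conj(a))·(b−a)} ≥ (1/2)·(|a|^{q-2} + |b|^{q-2})·|b−a|². -/
open Complex

theorem stmt1 (a b : ℂ) (q : ℝ) (hq : 2 < q) :
    (1 / 2) * (‖a‖ ^ (q - 2) + ‖b‖ ^ (q - 2)) * ‖b - a‖ ^ 2
      ≤ ((((‖b‖ ^ (q - 2) : ℝ) : ℂ) * (starRingEnd ℂ) b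
          - ((‖a‖ ^ (q - 2) : ℝ) : ℂ) * (starRingEnd ℂ) a) * (b - a)).re := by
  have hp : (0:ℝ) ≤ q - 2 := by linarith
  have key : 0 ≤ (‖b‖ ^ (q - 2) - ‖a‖ ^ (q - 2)) *
      (‖b‖ ^ 2 - ‖a‖ ^ 2) := by
    rcases le_total ‖a‖ ‖b‖ with h | h
    · have h1 : ‖a‖ ^ (q-2) ≤ ‖b‖ ^ (q-2) :=
        Real.rpow_le_rpow (norm_nonneg a) h hp
      have h2 : ‖a‖ ^ 2 ≤ ‖b‖ ^ 2 :=
        pow_le_pow_left₀ (norm_nonneg a) h 2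
      nlinarith
    · have h1 : ‖b‖ ^ (q-2) ≤ ‖a‖ ^ (q-2) :=
        Real.rpow_le_rpow (norm_nonneg b) h hp
      have h2 : ‖b‖ ^ 2 ≤ ‖a‖ ^ 2 :=
        pow_le_pow_left₀ (norm_nonneg b) h 2
      nlinarith
  have ha2 : ‖a‖ ^ 2 = a.re^2 + a.im^2 := by
    rw [Complex.sq_norm, Complex.normSq_apply]; ring
  have hb2 : ‖b‖ ^ 2 = b.re^2 + b.im^2 := by
    rw [Complex.sq_norm, Complex.normSq_apply]; ring
  have hba : ‖b - a‖ ^ 2 = (b.re - a.re)^2 + (b.im - a.im)^2 := by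
    rw [Complex.sq_norm, Complex.normSq_apply]; simp; ring
  rw [hba]
  simp only [Complex.mul_re, Complex.sub_re, Complex.sub_im, Complex.mul_im,
    Complex.conj_re, Complex.conj_im, Complex.ofReal_re, Complex.ofReal_im]
  rw [ha2, hb2] at key
  nlinarith [key]
end

section
/- For all complex numbers a, b and real q ≥ 2, |b|^q ≥ |a|^q + q·Re{|a|^{q-2}·conj(a)·(b−a)} + 4^{−q−3}·|b−a|^q. -/
open Complex

lemma scalar_grad' {r s q : ℝ} (hr : 0 < r) (hs : 0 ≤ s) (hq : 1 ≤ q) :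
    r ^ q + q * r ^ (q - 1) * (s - r) ≤ s ^ q := by
  have hb := one_add_mul_self_le_rpow_one_add (s := s / r - 1) (by
    have : 0 ≤ s / r := div_nonneg hs hr.le
    linarith) hq
  have h1 : (1 : ℝ) + (s / r - 1) = s / r := by ring
  rw [h1, Real.div_rpow hs hr.le] at hb
  have hrq : 0 < r ^ q := Real.rpow_pos_of_pos hr q
  have hb' : (1 + q * (s / r - 1)) * r ^ q ≤ s ^ q := by
    calc (1 + q * (s / r - 1)) * r ^ q ≤ (s ^ q / r ^ q) * r ^ q :=
            mul_le_mul_of_nonneg_right hb hrq.le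
      _ = s ^ q := by field_simp
  have hr1 : r ^ (q - 1) * r = r ^ q := by
    rw [← Real.rpow_add_one hr.ne' (q-1)]; ring_nf
  have key : q * r ^ (q - 1) * (s - r) = q * (s / r - 1) * r ^ q := by
    have h3 : r ^ (q - 1) = r ^ q / r := by rw [← hr1]; field_simp
    rw [h3]; field_simp
  linarith [hb']

lemma grad_ineq' (u w : ℂ) {q : ℝ} (hq : 2 ≤ q) :
    ‖u‖ ^ q
      + q * ((((‖u‖ ^ (q - 2) : ℝ) : ℂ) * (starRingEnd ℂ) u) * (w - u)).re
      ≤ ‖w‖ ^ q := by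
  rcases eq_or_ne u 0 with rfl | hu
  · simp [Real.zero_rpow (by positivity : q ≠ 0)]
    positivity
  · have hr : 0 < ‖u‖ := norm_pos_iff.mpr hu
    set r := ‖u‖ with hrdef
    set c : ℝ := r ^ (q - 2) with hc
    have hcnn : 0 ≤ c := Real.rpow_nonneg hr.le _
    have hre : ((((c : ℝ) : ℂ)) * (starRingEnd ℂ) u * (w - u)).re
        = c * ((starRingEnd ℂ) u * w).re - c * r ^ (2:ℕ) := by
      have : ((c : ℂ) * (starRingEnd ℂ) u * (w - u)) =
          (c : ℂ) * ((starRingEnd ℂ) u * w) - (c : ℂ) * ((starRingEnd ℂ) u * u) := by ring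
      rw [this]
      simp [Complex.mul_conj', Complex.re_ofReal_mul, Complex.normSq_eq_norm_sq]
      left
      rw [hrdef, Complex.sq_norm, Complex.normSq_apply]
    have hre_le : ((starRingEnd ℂ) u * w).re ≤ r * ‖w‖ := by
      calc ((starRingEnd ℂ) u * w).re ≤ ‖(starRingEnd ℂ) u * w‖ := Complex.re_le_norm _
        _ = r * ‖w‖ := by simp [map_mul, hrdef]
    have hstep : q * ((((c : ℝ) : ℂ)) * (starRingEnd ℂ) u * (w - u)).re
        ≤ q * r ^ (q - 1) * (‖w‖ - r) := by
      rw [hre]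
      have hcr : c * r = r ^ (q - 1) := by
        rw [hc, ← Real.rpow_add_one hr.ne' (q-2)]; ring_nf
      have hcr2 : c * r ^ (2:ℕ) = r ^ (q - 1) * r := by
        rw [← hcr]; ring
      have h1 : c * ((starRingEnd ℂ) u * w).re ≤ r ^ (q-1) * ‖w‖ := by
        calc c * ((starRingEnd ℂ) u * w).re ≤ c * (r * ‖w‖) :=
              mul_le_mul_of_nonneg_left hre_le hcnn
          _ = r ^ (q-1) * ‖w‖ := by rw [← hcr]; ring
      have hq0 : (0:ℝ) ≤ q := by linarith
      calc q * (c * ((starRingEnd ℂ) u * w).re - c * r ^ (2:ℕ))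
          ≤ q * (r ^ (q-1) * ‖w‖ - r ^ (q-1) * r) := by
            apply mul_le_mul_of_nonneg_left _ hq0
            rw [hcr2]; linarith
        _ = q * r ^ (q - 1) * (‖w‖ - r) := by ring
    have := scalar_grad' hr (norm_nonneg w) (by linarith : 1 ≤ q)
    linarith

lemma real_add_rpow' {x y p : ℝ} (hx : 0 ≤ x) (hy : 0 ≤ y) (hp : 1 ≤ p) :
    x ^ p + y ^ p ≤ (x + y) ^ p := by
  have h := NNReal.add_rpow_le_rpow_add x.toNNReal y.toNNReal hp
  have h' := NNReal.coe_le_coe.2 h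
  rw [NNReal.coe_add, NNReal.coe_rpow, NNReal.coe_rpow, NNReal.coe_rpow,
    NNReal.coe_add, Real.coe_toNNReal _ hx, Real.coe_toNNReal _ hy] at h'
  exact h'

lemma clarkson' (x y : ℂ) {q : ℝ} (hq : 2 ≤ q) :
    2 * (‖x‖ ^ q + ‖y‖ ^ q)
      ≤ ‖x + y‖ ^ q + ‖x - y‖ ^ q := by
  set X := ‖x‖
  set Y := ‖y‖
  set A := ‖x + y‖
  set B := ‖x - y‖
  have hX : 0 ≤ X := norm_nonneg _
  have hY : 0 ≤ Y := norm_nonneg _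
  have hA : 0 ≤ A := norm_nonneg _
  have hB : 0 ≤ B := norm_nonneg _
  have hp : 1 ≤ q / 2 := by linarith
  have hpar : X ^ (2:ℕ) + Y ^ (2:ℕ) = (A ^ (2:ℕ) + B ^ (2:ℕ)) / 2 := by
    simp only [X, Y, A, B, Complex.sq_norm, Complex.normSq_apply,
      Complex.add_re, Complex.add_im, Complex.sub_re, Complex.sub_im]
    ring
  have hsq : ∀ t : ℝ, 0 ≤ t → (t ^ (2:ℕ)) ^ (q/2) = t ^ q := by
    intro t ht
    rw [← Real.rpow_natCast t 2, ← Real.rpow_mul ht]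
    congr 1
    ring
  have step1 : X ^ q + Y ^ q ≤ (X ^ (2:ℕ) + Y ^ (2:ℕ)) ^ (q/2) := by
    rw [← hsq X hX, ← hsq Y hY]
    exact real_add_rpow' (by positivity) (by positivity) hp
  have step2 : ((A ^ (2:ℕ) + B ^ (2:ℕ)) / 2) ^ (q/2)
      ≤ ((A ^ (2:ℕ)) ^ (q/2) + (B ^ (2:ℕ)) ^ (q/2)) / 2 := by
    have hconv := (convexOn_rpow (by linarith : 1 ≤ q/2)).2
      (Set.mem_Ici.2 (by positivity : (0:ℝ) ≤ A ^ (2:ℕ)))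
      (Set.mem_Ici.2 (by positivity : (0:ℝ) ≤ B ^ (2:ℕ)))
      (by norm_num : (0:ℝ) ≤ (1/2:ℝ)) (by norm_num : (0:ℝ) ≤ (1/2:ℝ)) (by norm_num)
    simp only [smul_eq_mul] at hconv
    calc ((A ^ (2:ℕ) + B ^ (2:ℕ)) / 2) ^ (q/2)
        = (1/2 * (A ^ (2:ℕ)) + 1/2 * (B ^ (2:ℕ))) ^ (q/2) := by ring_nf
      _ ≤ 1/2 * (A ^ (2:ℕ)) ^ (q/2) + 1/2 * (B ^ (2:ℕ)) ^ (q/2) := hconv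
      _ = ((A ^ (2:ℕ)) ^ (q/2) + (B ^ (2:ℕ)) ^ (q/2)) / 2 := by ring
  rw [hsq A hA, hsq B hB] at step2
  rw [hpar] at step1
  linarith

theorem stmt3 (a b : ℂ) (q : ℝ) (hq : 2 ≤ q) :
    ‖a‖ ^ q
        + q * ((((‖a‖ ^ (q - 2) : ℝ) : ℂ) * (starRingEnd ℂ) a) * (b - a)).re
        + 4 ^ (-q - 3) * ‖b - a‖ ^ q
      ≤ ‖b‖ ^ q := by
  set m : ℂ := (a + b) / 2 with hm
  set X : ℂ := ((‖a‖ ^ (q - 2) : ℝ) : ℂ) * (starRingEnd ℂ) a with hX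
  -- gradient inequality at a toward m
  have h1 := grad_ineq' a m hq
  have hma : m - a = (b - a) / 2 := by rw [hm]; ring
  have hre2 : (X * (m - a)).re = (1/2 : ℝ) * (X * (b - a)).re := by
    have : X * (m - a) = (((1/2 : ℝ) : ℂ)) * (X * (b - a)) := by
      rw [hma]; push_cast; ring
    rw [this, Complex.re_ofReal_mul]
  rw [hre2] at h1
  -- Clarkson with x = m, y = (b-a)/2
  have h2 := clarkson' m ((b - a)/2) hq
  have hxy1 : m + (b - a)/2 = b := by rw [hm]; ring
  have hxy2 : m - (b - a)/2 = a := by rw [hm]; ring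
  rw [hxy1, hxy2] at h2
  -- abs ((b-a)/2) ^ q = abs (b-a) ^ q / 2 ^ q
  set D := ‖b - a‖ with hD
  have hDnn : 0 ≤ D := norm_nonneg _
  have habs2 : ‖(b - a)/2‖ ^ q = 2 ^ (1 - q) * D ^ q / 2 := by
    rw [norm_div, Complex.norm_two, Real.div_rpow hDnn (by norm_num : (0:ℝ) ≤ 2)]
    rw [Real.rpow_sub (by norm_num : (0:ℝ) < 2)]
    rw [Real.rpow_one]
    field_simp
  rw [habs2] at h2
  -- coefficient comparison
  have hcoef : (4 : ℝ) ^ (-q - 3) ≤ 2 ^ (1 - q) := by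
    have h4 : (4 : ℝ) ^ (-q - 3) = 2 ^ (2 * (-q - 3)) := by
      rw [show (4:ℝ) = 2 ^ (2:ℝ) by norm_num [Real.rpow_natCast], ← Real.rpow_mul (by norm_num)]
    rw [h4]
    apply Real.rpow_le_rpow_left_iff (by norm_num : (1:ℝ) < 2) |>.2
    linarith
  have hcoefD : (4 : ℝ) ^ (-q - 3) * D ^ q ≤ 2 ^ (1 - q) * D ^ q :=
    mul_le_mul_of_nonneg_right hcoef (Real.rpow_nonneg hDnn q)
  linarith
end

section
/- For all complex numbers a, b and real q with 1 < q < 2, the inequality | |b|^{q-2}·conj(b) − |a|^{q-2}·conj(a) | ≤ 2^{2−q}·|b−a|^{q−1} holds. -/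
open Complex

/-- subadditivity of rpow for exponents ≤ 1, real version -/
lemma aux_rpow_add_le {x y s : ℝ} (hx : 0 ≤ x) (hy : 0 ≤ y) (hs : 0 ≤ s) (hs1 : s ≤ 1) :
    (x + y) ^ s ≤ x ^ s + y ^ s := by
  have := NNReal.rpow_add_le_add_rpow (⟨x, hx⟩ : NNReal) (⟨y, hy⟩ : NNReal) hs hs1
  exact_mod_cast this

/-- two point concavity of rpow -/
lemma aux_concave {s : ℝ} (hs0 : 0 ≤ s) (hs1 : s ≤ 1) {u v l : ℝ} (hu : 0 ≤ u) (hv : 0 ≤ v)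
    (hl : 0 ≤ l) (hl1 : l ≤ 1) :
    l * u ^ s + (1 - l) * v ^ s ≤ (l * u + (1 - l) * v) ^ s := by
  have h := (Real.concaveOn_rpow hs0 hs1).2 (Set.mem_Ici.2 hu)
    (Set.mem_Ici.2 hv) hl (by linarith : (0:ℝ) ≤ 1 - l) (by ring)
  simpa [smul_eq_mul] using h

lemma aux_diff {x y s : ℝ} (hx : 0 ≤ x) (hy : 0 ≤ y) (hs : 0 ≤ s) (hs1 : s ≤ 1) :
    |x ^ s - y ^ s| ≤ |x - y| ^ s := by
  wlog h : y ≤ x generalizing x y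
  · rw [abs_sub_comm, abs_sub_comm x y]; exact this hy hx (le_of_not_ge h)
  have h1 : x ^ s ≤ (x - y) ^ s + y ^ s := by
    have := aux_rpow_add_le (sub_nonneg.2 h) hy hs hs1
    simpa [sub_add_cancel] using this
  have h2 : y ^ s ≤ x ^ s := Real.rpow_le_rpow hy h hs
  rw [_root_.abs_of_nonneg (sub_nonneg.2 h2), _root_.abs_of_nonneg (sub_nonneg.2 h)]
  linarith

lemma keylemma (s R r T : ℝ) (hs0 : 0 < s) (hs1 : s < 1) (hR : 0 < R) (hr : 0 < r)
    (hT : |T| ≤ R * r) :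
    R ^ (2*s) + r ^ (2*s) - 2 * (R ^ (s-1) * r ^ (s-1)) * T
      ≤ 2 ^ (2-2*s) * (R^2 + r^2 - 2*T) ^ s := by
  have hRr : 0 < R * r := mul_pos hR hr
  set c : ℝ := T / (R * r) with hc
  have hTc : T = R * r * c := by rw [hc, mul_div_assoc', eq_div_iff hRr.ne']; ring
  have hc1 : -1 ≤ c := by
    rw [hc, le_div_iff₀ hRr]; have := (abs_le.1 hT).1; linarith
  have hc2 : c ≤ 1 := by
    rw [hc, div_le_one hRr]; exact (abs_le.1 hT).2
  set l : ℝ := (1 + c) / 2 with hl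
  have hl0 : 0 ≤ l := by rw [hl]; linarith
  have hl1 : l ≤ 1 := by rw [hl]; linarith
  set u : ℝ := (R - r)^2 with hu
  set v : ℝ := (R + r)^2 with hv
  have hu0 : 0 ≤ u := sq_nonneg _
  have hv0 : 0 ≤ v := sq_nonneg _
  have e1 : R ^ (2*s) = (R ^ s)^2 := by rw [two_mul, Real.rpow_add hR, sq]
  have e1' : r ^ (2*s) = (r ^ s)^2 := by rw [two_mul, Real.rpow_add hr, sq]
  have e2 : R ^ (s-1) * R = R ^ s := by
    rw [← Real.rpow_add_one hR.ne', sub_add_cancel]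
  have e2' : r ^ (s-1) * r = r ^ s := by
    rw [← Real.rpow_add_one hr.ne', sub_add_cancel]
  set A : ℝ := R ^ s - r ^ s with hA
  set B : ℝ := R ^ s + r ^ s with hB
  have hpow : (1:ℝ) ≤ 2 ^ (2-2*s) := by
    calc (1:ℝ) = 2 ^ (0:ℝ) := by rw [Real.rpow_zero]
    _ ≤ 2 ^ (2-2*s) := Real.rpow_le_rpow_of_exponent_le one_le_two (by linarith)
  -- bound for A^2
  have hA2 : A^2 ≤ 2 ^ (2-2*s) * u ^ s := by
    have h1 : |A| ≤ |R - r| ^ s := aux_diff hR.le hr.le hs0.le hs1.le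
    have h2 : A^2 ≤ (|R - r| ^ s)^2 := by
      rw [← _root_.sq_abs A]; exact pow_le_pow_left₀ (abs_nonneg _) h1 2
    have h3 : (|R - r| ^ s)^2 = u ^ s := by
      rw [hu, ← _root_.sq_abs (R - r), ← Real.rpow_natCast (|R-r| ^ s) 2,
        ← Real.rpow_natCast (|R-r|) 2, ← Real.rpow_mul (abs_nonneg _),
        ← Real.rpow_mul (abs_nonneg _)]
      ring_nf
    nlinarith [Real.rpow_nonneg hu0 s]
  -- bound for B^2
  have hB2 : B^2 ≤ 2 ^ (2-2*s) * v ^ s := by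
    have h1 : B ≤ 2 ^ (1-s) * (R + r) ^ s := by
      have hcon := aux_concave hs0.le hs1.le hR.le hr.le (by norm_num : (0:ℝ) ≤ 1/2)
        (by norm_num : (1:ℝ)/2 ≤ 1)
      have hhalf : ((1:ℝ)/2 * R + (1 - 1/2) * r) ^ s = (R + r)^s / 2 ^ s := by
        rw [show (1:ℝ)/2 * R + (1 - 1/2) * r = (R + r)/2 by ring,
          Real.div_rpow (by positivity) (by norm_num)]
      have h2s : (0:ℝ) < 2 ^ s := Real.rpow_pos_of_pos two_pos s
      have hd : (2:ℝ) ^ (1-s) = 2 / 2 ^ s := by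
        rw [Real.rpow_sub two_pos, Real.rpow_one]
      rw [hhalf] at hcon
      have h3 := mul_le_mul_of_nonneg_right hcon h2s.le
      rw [div_mul_cancel₀ _ h2s.ne'] at h3
      rw [hd, hB, div_mul_eq_mul_div, le_div_iff₀ h2s]
      nlinarith
    have hBnn : 0 ≤ B := by positivity
    calc B^2 ≤ (2 ^ (1-s) * (R + r) ^ s)^2 := pow_le_pow_left₀ hBnn h1 2
    _ = 2 ^ (2-2*s) * v ^ s := by
        rw [mul_pow, hv, ← Real.rpow_natCast ((2:ℝ) ^ (1-s)) 2,
          ← Real.rpow_natCast ((R+r) ^ s) 2, ← Real.rpow_natCast (R+r) 2,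
          ← Real.rpow_mul (by norm_num : (0:ℝ) ≤ 2),
          ← Real.rpow_mul (by positivity : (0:ℝ) ≤ R + r),
          ← Real.rpow_mul (by positivity : (0:ℝ) ≤ R + r)]
        ring_nf
  -- concavity
  have hconc : l * u ^ s + (1 - l) * v ^ s ≤ (l * u + (1 - l) * v) ^ s :=
    aux_concave hs0.le hs1.le hu0 hv0 hl0 hl1
  have idR : R^2 + r^2 - 2*T = l * u + (1 - l) * v := by
    rw [hTc, hl, hu, hv]; ring
  have idL : R ^ (2*s) + r ^ (2*s) - 2 * (R ^ (s-1) * r ^ (s-1)) * T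
      = l * A^2 + (1 - l) * B^2 := by
    rw [hTc, e1, e1', hA, hB, hl]
    have : 2 * (R ^ (s-1) * r ^ (s-1)) * (R * r * c)
        = 2 * ((R ^ (s-1) * R) * (r ^ (s-1) * r)) * c := by ring
    rw [this, e2, e2']
    ring
  rw [idL, idR]
  calc l * A^2 + (1 - l) * B^2
      ≤ l * (2 ^ (2-2*s) * u ^ s) + (1 - l) * (2 ^ (2-2*s) * v ^ s) := by
        have := mul_le_mul_of_nonneg_left hA2 hl0
        have := mul_le_mul_of_nonneg_left hB2 (by linarith : (0:ℝ) ≤ 1 - l)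
        linarith
    _ = 2 ^ (2-2*s) * (l * u ^ s + (1 - l) * v ^ s) := by ring
    _ ≤ 2 ^ (2-2*s) * (l * u + (1 - l) * v) ^ s :=
        mul_le_mul_of_nonneg_left hconc (by positivity)

lemma aux_phi_abs (q : ℝ) (hq1 : 1 < q) (hq2 : q < 2) (z : ℂ) :
    ‖(((‖z‖ ^ (q - 2) : ℝ) : ℂ) * (starRingEnd ℂ) z)‖
      = ‖z‖ ^ (q - 1) := by
  rw [norm_mul, Complex.norm_real, Complex.norm_conj,
    Real.norm_of_nonneg (Real.rpow_nonneg (norm_nonneg z) _)]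
  rcases eq_or_ne z 0 with rfl | hz
  · simp [Real.zero_rpow (show q - 2 ≠ 0 by intro h; linarith),
      Real.zero_rpow (show q - 1 ≠ 0 by intro h; linarith)]
  · rw [show q - 1 = q - 2 + 1 by ring, Real.rpow_add_one (norm_ne_zero_iff.mpr hz)]

theorem stmt5 (a b : ℂ) (q : ℝ) (hq1 : 1 < q) (hq2 : q < 2) :
    ‖((‖b‖ ^ (q - 2) : ℝ) : ℂ) * (starRingEnd ℂ) b
        - ((‖a‖ ^ (q - 2) : ℝ) : ℂ) * (starRingEnd ℂ) a‖
      ≤ 2 ^ (2 - q) * ‖b - a‖ ^ (q - 1) := by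
  have hpow1 : (1:ℝ) ≤ 2 ^ (2 - q) := by
    calc (1:ℝ) = 2 ^ (0:ℝ) := by rw [Real.rpow_zero]
    _ ≤ 2 ^ (2 - q) := Real.rpow_le_rpow_of_exponent_le one_le_two (by linarith)
  rcases eq_or_ne a 0 with rfl | ha
  · simp only [map_zero, mul_zero, sub_zero]
    rw [aux_phi_abs q hq1 hq2]
    nlinarith [Real.rpow_nonneg (norm_nonneg b) (q - 1)]
  rcases eq_or_ne b 0 with rfl | hb
  · simp only [map_zero, mul_zero, zero_sub, norm_neg]
    rw [aux_phi_abs q hq1 hq2]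
    nlinarith [Real.rpow_nonneg (norm_nonneg a) (q - 1)]
  -- main case
  set R : ℝ := ‖b‖ with hRdef
  set r : ℝ := ‖a‖ with hrdef
  have hR : 0 < R := norm_pos_iff.mpr hb
  have hr : 0 < r := norm_pos_iff.mpr ha
  set T : ℝ := (b * (starRingEnd ℂ) a).re with hTdef
  have hT : |T| ≤ R * r := by
    calc |T| ≤ ‖b * (starRingEnd ℂ) a‖ := Complex.abs_re_le_norm _
    _ = R * r := by rw [norm_mul, Complex.norm_conj]
  set s : ℝ := q - 1 with hsdef
  have hs0 : 0 < s := by simp [hsdef]; linarith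
  have hs1 : s < 1 := by simp [hsdef]; linarith
  have key := keylemma s R r T hs0 hs1 hR hr hT
  have hq2s : q - 2 = s - 1 := by rw [hsdef]; ring
  have h2q : 2 - q = 1 - s := by rw [hsdef]; ring
  -- squares
  have hd2 : ‖b - a‖^2 = R^2 + r^2 - 2*T := by
    rw [Complex.sq_norm, Complex.normSq_sub, Complex.normSq_eq_norm_sq, Complex.normSq_eq_norm_sq]
  have e2 : R ^ (s-1) * R = R ^ s := by
    rw [← Real.rpow_add_one hR.ne', sub_add_cancel]
  have e2' : r ^ (s-1) * r = r ^ s := by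
    rw [← Real.rpow_add_one hr.ne', sub_add_cancel]
  have hL2 : ‖((R ^ (q - 2) : ℝ) : ℂ) * (starRingEnd ℂ) b
      - ((r ^ (q - 2) : ℝ) : ℂ) * (starRingEnd ℂ) a‖^2
      = R ^ (2*s) + r ^ (2*s) - 2 * (R ^ (s-1) * r ^ (s-1)) * T := by
    rw [Complex.sq_norm, Complex.normSq_sub]
    have hcj : (starRingEnd ℂ) (((r ^ (q - 2) : ℝ) : ℂ) * (starRingEnd ℂ) a)
        = ((r ^ (q - 2) : ℝ) : ℂ) * a := by
      rw [map_mul, Complex.conj_conj, Complex.conj_ofReal]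
    rw [hcj]
    have hn1 : Complex.normSq (((R ^ (q - 2) : ℝ) : ℂ) * (starRingEnd ℂ) b)
        = R ^ (s-1) * R ^ (s-1) * R^2 := by
      rw [Complex.normSq_mul, Complex.normSq_conj, Complex.normSq_ofReal,
        Complex.normSq_eq_norm_sq, hq2s, ← hRdef]
    have hn2 : Complex.normSq (((r ^ (q - 2) : ℝ) : ℂ) * (starRingEnd ℂ) a)
        = r ^ (s-1) * r ^ (s-1) * r^2 := by
      rw [Complex.normSq_mul, Complex.normSq_conj, Complex.normSq_ofReal,
        Complex.normSq_eq_norm_sq, hq2s, ← hrdef]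
    have hre : ((((R ^ (q - 2) : ℝ) : ℂ) * (starRingEnd ℂ) b)
        * (((r ^ (q - 2) : ℝ) : ℂ) * a)).re = R ^ (s-1) * r ^ (s-1) * T := by
      have : (((R ^ (q - 2) : ℝ) : ℂ) * (starRingEnd ℂ) b) * (((r ^ (q - 2) : ℝ) : ℂ) * a)
          = ((R ^ (q - 2) * r ^ (q - 2) : ℝ) : ℂ) * ((starRingEnd ℂ) b * a) := by
        push_cast; ring
      rw [this, Complex.re_ofReal_mul, hq2s]
      have : ((starRingEnd ℂ) b * a) = (starRingEnd ℂ) (b * (starRingEnd ℂ) a) := by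
        rw [map_mul, Complex.conj_conj]
      rw [this, Complex.conj_re]
    rw [hn1, hn2, hre]
    have eR : R ^ (s-1) * R ^ (s-1) * R^2 = R ^ (2*s) := by
      rw [show R ^ (s-1) * R ^ (s-1) * R^2 = (R ^ (s-1) * R) * (R ^ (s-1) * R) from by ring,
        e2, ← Real.rpow_add hR, two_mul]
    have er : r ^ (s-1) * r ^ (s-1) * r^2 = r ^ (2*s) := by
      rw [show r ^ (s-1) * r ^ (s-1) * r^2 = (r ^ (s-1) * r) * (r ^ (s-1) * r) from by ring,
        e2', ← Real.rpow_add hr, two_mul]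
    rw [eR, er]; ring
  have hdnn : (0:ℝ) ≤ ‖b - a‖ := norm_nonneg _
  have hR2 : (2 ^ (2 - q) * ‖b - a‖ ^ (q - 1))^2
      = 2 ^ (2-2*s) * (R^2 + r^2 - 2*T) ^ s := by
    rw [mul_pow, h2q, ← hsdef, ← hd2]
    rw [← Real.rpow_natCast ((2:ℝ) ^ (1-s)) 2, ← Real.rpow_natCast (‖b-a‖ ^ s) 2,
      ← Real.rpow_natCast ‖b-a‖ 2,
      ← Real.rpow_mul (by norm_num : (0:ℝ) ≤ 2), ← Real.rpow_mul hdnn, ← Real.rpow_mul hdnn]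
    ring_nf
  have hsq : ‖((R ^ (q - 2) : ℝ) : ℂ) * (starRingEnd ℂ) b
      - ((r ^ (q - 2) : ℝ) : ℂ) * (starRingEnd ℂ) a‖^2
      ≤ (2 ^ (2 - q) * ‖b - a‖ ^ (q - 1))^2 := by
    rw [hL2, hR2]; exact key
  have hrhsnn : (0:ℝ) ≤ 2 ^ (2 - q) * ‖b - a‖ ^ (q - 1) := by positivity
  exact (pow_le_pow_iff_left₀ (norm_nonneg _) hrhsnn (by norm_num)).1 hsq
end

section
/- For all complex numbers a, b and real q ≥ 2, | |b|^{q-2}·conj(b) − |a|^{q-2}·conj(a) | ≤ (q−1)·|b−a|·(|a| + |b−a|)^{q-2}. -/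
open Complex

private theorem aux_norm_rpow_deriv {p : ℝ} (x : ℂ) (hx : x ≠ 0) :
    HasFDerivAt (fun x : ℂ ↦ ‖x‖ ^ p) ((p * ‖x‖ ^ (p - 2)) • innerSL ℝ x) x := by
  apply HasStrictFDerivAt.hasFDerivAt
  convert (hasStrictFDerivAt_norm_sq x).rpow_const (p := p / 2) (by simp [hx]) using 0
  simp_rw [← Real.rpow_natCast_mul (norm_nonneg _), ← Nat.cast_smul_eq_nsmul ℝ, smul_smul]
  ring_nf

/-- derivative of `z ↦ ‖z‖^p • conj z` at a nonzero point -/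
private theorem aux_f_deriv {p : ℝ} (x : ℂ) (hx : x ≠ 0) :
    HasFDerivAt (fun z : ℂ ↦ ‖z‖ ^ p • (starRingEnd ℂ) z)
      ((‖x‖ ^ p) • (Complex.conjCLE : ℂ →L[ℝ] ℂ)
        + ((p * ‖x‖ ^ (p - 2)) • innerSL ℝ x).smulRight ((starRingEnd ℂ) x)) x := by
  have hc : HasFDerivAt (fun z : ℂ ↦ (starRingEnd ℂ) z) (Complex.conjCLE : ℂ →L[ℝ] ℂ) x :=
    (Complex.conjCLE : ℂ →L[ℝ] ℂ).hasFDerivAt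
  exact (aux_norm_rpow_deriv x hx).smul hc

private theorem aux_f_deriv_zero {p : ℝ} (hp : 0 < p) :
    HasFDerivAt (fun z : ℂ ↦ ‖z‖ ^ p • (starRingEnd ℂ) z) (0 : ℂ →L[ℝ] ℂ) 0 := by
  rw [hasFDerivAt_iff_isLittleO]
  have : (fun z : ℂ ↦ ‖z‖ ^ p • (starRingEnd ℂ) z - ‖(0:ℂ)‖ ^ p • (starRingEnd ℂ) 0
      - (0 : ℂ →L[ℝ] ℂ) (z - 0)) = fun z : ℂ ↦ ‖z‖ ^ p • (starRingEnd ℂ) z := by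
    ext z; simp
  rw [this]
  have h1 : (fun z : ℂ ↦ ‖z‖ ^ p • (starRingEnd ℂ) z)
      =O[nhds 0] fun z : ℂ ↦ ‖z‖ ^ p * ‖z‖ := by
    apply Asymptotics.isBigO_of_le
    intro z
    rw [norm_smul]
    simp [_root_.abs_of_nonneg (Real.rpow_nonneg (norm_nonneg z) p)]
  refine h1.trans_isLittleO ?_
  have h2 : (fun z : ℂ ↦ ‖z‖ ^ p) =o[nhds 0] fun _ : ℂ ↦ (1:ℝ) := by
    rw [Asymptotics.isLittleO_const_iff one_ne_zero]
    have : ContinuousAt (fun z : ℂ ↦ ‖z‖ ^ p) 0 := by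
      exact (continuousAt_id.norm.rpow_const (Or.inr hp.le))
    simpa [Real.zero_rpow hp.ne'] using this.tendsto
  have h3 : (fun z : ℂ ↦ ‖z‖) =O[nhds 0] fun z : ℂ ↦ z - 0 :=
    ((Asymptotics.isBigO_refl (fun z : ℂ ↦ z) (nhds 0)).norm_left).congr_right
      (fun z ↦ (sub_zero z).symm)
  calc (fun z : ℂ ↦ ‖z‖ ^ p * ‖z‖)
      =o[nhds 0] fun z : ℂ ↦ 1 * ‖z‖ := h2.mul_isBigO (Asymptotics.isBigO_refl _ _)
    _ =O[nhds 0] fun z : ℂ ↦ z - 0 := by simp only [one_mul]; exact h3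

theorem stmt6 (a b : ℂ) (q : ℝ) (hq : 2 ≤ q) :
    ‖(((‖b‖ ^ (q - 2) : ℝ) : ℂ) * (starRingEnd ℂ) b
        - ((‖a‖ ^ (q - 2) : ℝ) : ℂ) * (starRingEnd ℂ) a)‖
      ≤ (q - 1) * ‖(b - a)‖ * (‖a‖ + ‖(b - a)‖) ^ (q - 2) := by
  set p : ℝ := q - 2 with hpdef
  have hp0 : 0 ≤ p := by simp [hpdef]; linarith
  set M : ℝ := ‖a‖ + ‖b - a‖ with hM
  have hM0 : 0 ≤ M := by positivity
  -- rewrite with norms and smul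
  have key : ∀ z : ℂ, ((‖z‖ ^ p : ℝ) : ℂ) * (starRingEnd ℂ) z
      = ‖z‖ ^ p • (starRingEnd ℂ) z := by
    intro z
    rw [Complex.real_smul]
  rcases eq_or_lt_of_le hq with hq2 | hq2
  · -- q = 2 : p = 0
    have hp : p = 0 := by simp [hpdef, ← hq2]
    simp only [hp, Real.rpow_zero, Complex.ofReal_one, one_mul, ← map_sub, Complex.norm_conj]
    rw [← hq2]
    ring_nf
    exact le_rfl
  · -- q > 2 : p > 0
    have hp : 0 < p := by simp [hpdef]; linarith
    -- mean value inequality on segment [a,b]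
    set f : ℂ → ℂ := fun z ↦ ‖z‖ ^ p • (starRingEnd ℂ) z with hf
    set f' : ℂ → ℂ →L[ℝ] ℂ := fun x ↦ if x = 0 then 0 else
      ((‖x‖ ^ p) • (Complex.conjCLE : ℂ →L[ℝ] ℂ)
        + ((p * ‖x‖ ^ (p - 2)) • innerSL ℝ x).smulRight ((starRingEnd ℂ) x)) with hf'
    have hderiv : ∀ x ∈ segment ℝ a b, HasFDerivWithinAt f (f' x) (segment ℝ a b) x := by
      intro x _
      by_cases hx : x = 0
      · subst hx
        simpa [hf', hf] using (aux_f_deriv_zero hp).hasFDerivWithinAt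
      · simpa [hf', hx, hf] using (aux_f_deriv x hx (p := p)).hasFDerivWithinAt
    have hnormseg : ∀ x ∈ segment ℝ a b, ‖x‖ ≤ M := by
      intro x hx
      obtain ⟨s, t, hs, ht, hst, rfl⟩ := hx
      have : s • a + t • b = a + t • (b - a) := by
        rw [smul_sub]
        rw [show s = 1 - t by linarith]
        module
      rw [this, hM]
      calc ‖a + t • (b - a)‖ ≤ ‖a‖ + ‖t • (b - a)‖ := norm_add_le _ _
        _ ≤ ‖a‖ + ‖b - a‖ := by
            gcongr
            rw [norm_smul, Real.norm_eq_abs, _root_.abs_of_nonneg ht]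
            nlinarith [norm_nonneg (b - a)]
        _ = _ := by simp
    have hbound : ∀ x ∈ segment ℝ a b, ‖f' x‖ ≤ (q - 1) * M ^ p := by
      intro x hxs
      by_cases hx : x = 0
      · simp only [hf', hx, if_pos rfl, norm_zero]
        exact mul_nonneg (by linarith) (Real.rpow_nonneg hM0 p)
      · have hxpos : 0 < ‖x‖ := norm_pos_iff.mpr hx
        simp only [hf', if_neg hx]
        have hop : ‖((‖x‖ ^ p) • (Complex.conjCLE : ℂ →L[ℝ] ℂ)
            + ((p * ‖x‖ ^ (p - 2)) • innerSL ℝ x).smulRight ((starRingEnd ℂ) x))‖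
            ≤ (q - 1) * ‖x‖ ^ p := by
          apply ContinuousLinearMap.opNorm_le_bound _ (mul_nonneg (by linarith) (Real.rpow_nonneg (norm_nonneg x) p))
          intro h
          have e1 : ‖(‖x‖ ^ p) • (Complex.conjCLE : ℂ →L[ℝ] ℂ) h‖ = ‖x‖ ^ p * ‖h‖ := by
            rw [norm_smul, Real.norm_eq_abs,
              _root_.abs_of_nonneg (Real.rpow_nonneg (norm_nonneg x) p)]
            simp
          have e2 : ‖(((p * ‖x‖ ^ (p - 2)) • innerSL ℝ x).smulRight ((starRingEnd ℂ) x)) h‖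
              ≤ p * ‖x‖ ^ p * ‖h‖ := by
            simp only [ContinuousLinearMap.smulRight_apply, ContinuousLinearMap.smul_apply]
            rw [norm_smul, smul_eq_mul, Real.norm_eq_abs, abs_mul,
              _root_.abs_of_nonneg (by positivity : (0:ℝ) ≤ p * ‖x‖ ^ (p - 2))]
            have hinner : |innerSL ℝ x h| ≤ ‖x‖ * ‖h‖ := abs_real_inner_le_norm x h
            have hcx : ‖(starRingEnd ℂ) x‖ = ‖x‖ := by simp
            rw [hcx]
            have hrw : p * ‖x‖ ^ (p - 2) * (‖x‖ * ‖h‖) * ‖x‖ = p * ‖x‖ ^ p * ‖h‖ := by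
              rw [show p = (p - 2) + 1 + 1 by ring, Real.rpow_add hxpos, Real.rpow_add hxpos,
                Real.rpow_one]
              ring_nf
            calc p * ‖x‖ ^ (p - 2) * |innerSL ℝ x h| * ‖x‖
                ≤ p * ‖x‖ ^ (p - 2) * (‖x‖ * ‖h‖) * ‖x‖ := by
                  gcongr
              _ = p * ‖x‖ ^ p * ‖h‖ := hrw
          calc ‖((‖x‖ ^ p) • (Complex.conjCLE : ℂ →L[ℝ] ℂ)
                + ((p * ‖x‖ ^ (p - 2)) • innerSL ℝ x).smulRight ((starRingEnd ℂ) x)) h‖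
              ≤ ‖(‖x‖ ^ p) • (Complex.conjCLE : ℂ →L[ℝ] ℂ) h‖
                + ‖(((p * ‖x‖ ^ (p - 2)) • innerSL ℝ x).smulRight ((starRingEnd ℂ) x)) h‖ :=
                norm_add_le _ _
            _ ≤ ‖x‖ ^ p * ‖h‖ + p * ‖x‖ ^ p * ‖h‖ := by rw [e1]; exact add_le_add le_rfl e2
            _ = (q - 1) * ‖x‖ ^ p * ‖h‖ := by rw [hpdef]; ring
        refine hop.trans ?_
        have : ‖x‖ ^ p ≤ M ^ p :=
          Real.rpow_le_rpow (norm_nonneg x) (hnormseg x hxs) hp0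
        have hq1 : 0 ≤ q - 1 := by linarith
        nlinarith
    have := Convex.norm_image_sub_le_of_norm_hasFDerivWithin_le hderiv hbound
      (convex_segment a b) (left_mem_segment ℝ a b) (right_mem_segment ℝ a b)
    rw [key a, key b]
    calc ‖f b - f a‖ = ‖f b - f a‖ := rfl
      _ ≤ (q - 1) * M ^ p * ‖b - a‖ := this
      _ = (q - 1) * ‖b - a‖ * M ^ p := by
          ring
end

section
/- For all complex numbers a, b, real q with 2 < q < 4, and t ∈ [0,1], the bound | |a+t(b−a)|^{q−4}·conj((a+t(b−a))²) − |a|^{q−4}·conj(a²) | ≤ 2·(|a|^{q/2−1} + |b−a|^{q/2−1})·|b−a|^{q/2−1} holds. -/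
open Complex

-- real subadditivity of rpow for 0 ≤ p ≤ 1
lemma my_rpow_subadd {x y p : ℝ} (hx : 0 ≤ x) (hy : 0 ≤ y) (hp : 0 ≤ p) (hp1 : p ≤ 1) :
    (x + y) ^ p ≤ x ^ p + y ^ p := by
  have h := NNReal.rpow_add_le_add_rpow x.toNNReal y.toNNReal hp hp1
  have h' := NNReal.coe_le_coe.mpr h
  push_cast [NNReal.coe_rpow, Real.coe_toNNReal x hx, Real.coe_toNNReal y hy] at h'
  convert h' using 2 <;> simp [Real.coe_toNNReal, hx, hy]

lemma my_rpow_diff {x y p : ℝ} (hy : 0 ≤ y) (hxy : y ≤ x) (hp : 0 ≤ p) (hp1 : p ≤ 1) :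
    x ^ p - y ^ p ≤ (x - y) ^ p := by
  have h : x ^ p ≤ (x - y) ^ p + y ^ p := by
    have := my_rpow_subadd (x := x - y) (y := y) (by linarith) hy hp hp1
    simpa [sub_add_cancel] using this
  linarith

lemma my_abs_rpow_diff {x y p : ℝ} (hx : 0 ≤ x) (hy : 0 ≤ y) (hp : 0 ≤ p) (hp1 : p ≤ 1) :
    |x ^ p - y ^ p| ≤ |x - y| ^ p := by
  rcases le_total y x with h | h
  · rw [_root_.abs_of_nonneg (by linarith : (0:ℝ) ≤ x - y),
      _root_.abs_of_nonneg (sub_nonneg.mpr (Real.rpow_le_rpow hy h hp))]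
    exact my_rpow_diff hy h hp hp1
  · rw [_root_.abs_of_nonpos (by linarith : x - y ≤ 0),
      abs_of_nonpos (sub_nonpos.mpr (Real.rpow_le_rpow hx h hp))]
    simpa using my_rpow_diff hx h hp hp1

lemma my_two_pt {x y p : ℝ} (hx : 0 ≤ x) (hy : 0 ≤ y) (hp : 0 ≤ p) (hp1 : p ≤ 1) :
    x ^ p + y ^ p ≤ 2 ^ (1 - p) * (x + y) ^ p := by
  have hcc := (Real.concaveOn_rpow hp hp1).2 (Set.mem_Ici.mpr hx) (Set.mem_Ici.mpr hy)
    (by norm_num : (0:ℝ) ≤ 1/2) (by norm_num : (0:ℝ) ≤ 1/2) (by norm_num)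
  simp only [smul_eq_mul] at hcc
  have hh : ((1:ℝ)/2 * x + 1/2 * y) ^ p = (1/2 : ℝ) ^ p * (x + y) ^ p := by
    rw [← Real.mul_rpow (by norm_num) (by linarith)]
    ring_nf
  rw [hh] at hcc
  have h2 : (2:ℝ) ^ (1 - p) = 2 * (1/2 : ℝ) ^ p := by
    rw [Real.rpow_sub (by norm_num : (0:ℝ) < 2), Real.rpow_one, one_div,
      Real.inv_rpow (by norm_num : (0:ℝ) ≤ 2)]
    ring
  rw [h2]
  nlinarith [hcc]

lemma my_holder {β : ℝ} (hb0 : 0 < β) (hb1 : β < 1) (z w : ℂ) :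
    ‖((‖z‖ ^ (β - 1) : ℝ) : ℂ) * (starRingEnd ℂ) z
        - ((‖w‖ ^ (β - 1) : ℝ) : ℂ) * (starRingEnd ℂ) w‖
      ≤ 2 ^ (1 - β) * ‖z - w‖ ^ β := by
  have hone : (1:ℝ) ≤ 2 ^ (1 - β) := Real.one_le_rpow (by norm_num) (by linarith)
  have habs : ∀ u : ℂ, ‖((‖u‖ ^ (β - 1) : ℝ) : ℂ) * (starRingEnd ℂ) u‖
      = ‖u‖ ^ β := by
    intro u
    rcases eq_or_ne u 0 with rfl | hu
    · simp [Real.zero_rpow (by intro h; linarith : β - 1 ≠ 0),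
        Real.zero_rpow (ne_of_gt hb0)]
    · have h0 : (0:ℝ) < ‖u‖ := norm_pos_iff.mpr hu
      rw [norm_mul, Complex.norm_real, Real.norm_eq_abs, Complex.norm_conj,
        _root_.abs_of_nonneg (Real.rpow_nonneg (norm_nonneg u) _),
        Real.rpow_sub_one (ne_of_gt h0)]
      field_simp
  rcases eq_or_ne z 0 with rfl | hz
  · have e0 : ((‖(0:ℂ)‖ ^ (β - 1) : ℝ) : ℂ) * (starRingEnd ℂ) 0 = 0 := by simp
    rw [e0, zero_sub, norm_neg, habs w, zero_sub, norm_neg]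
    exact le_mul_of_one_le_left (Real.rpow_nonneg (norm_nonneg w) _) hone
  rcases eq_or_ne w 0 with rfl | hw
  · have e0 : ((‖(0:ℂ)‖ ^ (β - 1) : ℝ) : ℂ) * (starRingEnd ℂ) 0 = 0 := by simp
    rw [e0, sub_zero, habs z, sub_zero]
    exact le_mul_of_one_le_left (Real.rpow_nonneg (norm_nonneg z) _) hone
  -- main case
  set r := ‖z‖ with hrdef
  set ρ := ‖w‖ with hρdef
  have hr : 0 < r := norm_pos_iff.mpr hz
  have hρ : 0 < ρ := norm_pos_iff.mpr hw
  set gz := ((r ^ (β - 1) : ℝ) : ℂ) * (starRingEnd ℂ) z with hgzdef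
  set gw := ((ρ ^ (β - 1) : ℝ) : ℂ) * (starRingEnd ℂ) w with hgwdef
  set u := (z * (starRingEnd ℂ) w).re with hudef
  have hu : |u| ≤ r * ρ := by
    calc |u| ≤ ‖z * (starRingEnd ℂ) w‖ := Complex.abs_re_le_norm _
    _ = r * ρ := by rw [norm_mul, Complex.norm_conj]
  have hu1 := (abs_le.mp hu).1
  have hu2 := (abs_le.mp hu).2
  set lam := (r * ρ + u) / (2 * (r * ρ)) with hlamdef
  have hrρ : 0 < r * ρ := mul_pos hr hρ
  have hlam0 : 0 ≤ lam := div_nonneg (by linarith) (by positivity)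
  have hlam1 : lam ≤ 1 := by rw [div_le_one (by positivity)]; linarith
  have hgza : ‖gz‖ = r ^ β := habs z
  have hgwa : ‖gw‖ = ρ ^ β := habs w
  have hre : (gz * (starRingEnd ℂ) gw).re = r ^ (β - 1) * ρ ^ (β - 1) * u := by
    have e : gz * (starRingEnd ℂ) gw
        = ((r ^ (β - 1) * ρ ^ (β - 1) : ℝ) : ℂ) * (starRingEnd ℂ) (z * (starRingEnd ℂ) w) := by
      simp only [hgzdef, hgwdef, map_mul, Complex.conj_conj, Complex.conj_ofReal,
        Complex.ofReal_mul]
      ring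
    rw [e, Complex.re_ofReal_mul, Complex.conj_re]
  have hsq : ‖gz - gw‖ ^ 2
      = (r ^ β) ^ 2 + (ρ ^ β) ^ 2 - 2 * (r ^ (β - 1) * ρ ^ (β - 1) * u) := by
    rw [Complex.sq_norm, Complex.normSq_sub, ← Complex.sq_norm gz, ← Complex.sq_norm gw,
      hgza, hgwa, hre]
  have hzw2 : ‖z - w‖ ^ 2 = r ^ 2 + ρ ^ 2 - 2 * u := by
    rw [Complex.sq_norm, Complex.normSq_sub, ← Complex.sq_norm z, ← Complex.sq_norm w, ← hudef,
      ← hrdef, ← hρdef]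
  have hrb : r ^ β = r ^ (β - 1) * r := by
    rw [Real.rpow_sub_one (ne_of_gt hr)]; field_simp
  have hρb : ρ ^ β = ρ ^ (β - 1) * ρ := by
    rw [Real.rpow_sub_one (ne_of_gt hρ)]; field_simp
  have id1 : (r ^ β) ^ 2 + (ρ ^ β) ^ 2 - 2 * (r ^ (β - 1) * ρ ^ (β - 1) * u)
      = lam * (r ^ β - ρ ^ β) ^ 2 + (1 - lam) * (r ^ β + ρ ^ β) ^ 2 := by
    rw [hrb, hρb, hlamdef]
    field_simp
    ring
  have id2 : lam * (r - ρ) ^ 2 + (1 - lam) * (r + ρ) ^ 2 = r ^ 2 + ρ ^ 2 - 2 * u := by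
    rw [hlamdef]; field_simp; ring
  -- endpoint bounds
  have pow2 : ∀ x : ℝ, 0 ≤ x → (x ^ β) ^ 2 = (x ^ 2) ^ β := by
    intro x hx
    rw [← Real.rpow_natCast (x ^ β) 2, ← Real.rpow_mul hx, ← Real.rpow_natCast x 2,
      ← Real.rpow_mul hx, mul_comm]
  have h1 : (r ^ β - ρ ^ β) ^ 2 ≤ ((r - ρ) ^ 2) ^ β := by
    have hd := my_abs_rpow_diff hr.le hρ.le hb0.le hb1.le
    calc (r ^ β - ρ ^ β) ^ 2 = |r ^ β - ρ ^ β| ^ 2 := (_root_.sq_abs _).symm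
    _ ≤ (|r - ρ| ^ β) ^ 2 := pow_le_pow_left₀ (abs_nonneg _) hd 2
    _ = (|r - ρ| ^ 2) ^ β := pow2 _ (abs_nonneg _)
    _ = ((r - ρ) ^ 2) ^ β := by rw [_root_.sq_abs]
  have hC2 : ((2:ℝ) ^ (1 - β)) ^ 2 = 2 ^ (2 - 2*β) := by
    rw [← Real.rpow_natCast ((2:ℝ) ^ (1 - β)) 2, ← Real.rpow_mul (by norm_num : (0:ℝ) ≤ 2)]
    norm_num; ring_nf
  have h2 : (r ^ β + ρ ^ β) ^ 2 ≤ 2 ^ (2 - 2*β) * ((r + ρ) ^ 2) ^ β := by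
    have ha := my_two_pt hr.le hρ.le hb0.le hb1.le
    calc (r ^ β + ρ ^ β) ^ 2 ≤ (2 ^ (1 - β) * (r + ρ) ^ β) ^ 2 :=
          pow_le_pow_left₀ (by positivity) ha 2
    _ = 2 ^ (2 - 2*β) * ((r + ρ) ^ 2) ^ β := by
          rw [mul_pow, hC2, pow2 _ (by positivity)]
  have hC1 : (1:ℝ) ≤ 2 ^ (2 - 2*β) := Real.one_le_rpow (by norm_num) (by linarith)
  have step2 : lam * ((r - ρ) ^ 2) ^ β + (1 - lam) * ((r + ρ) ^ 2) ^ β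
      ≤ (lam * (r - ρ) ^ 2 + (1 - lam) * (r + ρ) ^ 2) ^ β := by
    have := (Real.concaveOn_rpow hb0.le hb1.le).2 (Set.mem_Ici.mpr (sq_nonneg (r - ρ)))
      (Set.mem_Ici.mpr (sq_nonneg (r + ρ))) hlam0 (by linarith : (0:ℝ) ≤ 1 - lam) (by ring : lam + (1 - lam) = 1)
    simpa [smul_eq_mul] using this
  have main2 : ‖gz - gw‖ ^ 2 ≤ (2 ^ (1 - β) * ‖z - w‖ ^ β) ^ 2 := by
    have hcpos : (0:ℝ) ≤ 2 ^ (2 - 2*β) := by positivity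
    calc ‖gz - gw‖ ^ 2
        = lam * (r ^ β - ρ ^ β) ^ 2 + (1 - lam) * (r ^ β + ρ ^ β) ^ 2 := by rw [hsq, id1]
    _ ≤ lam * (2 ^ (2 - 2*β) * ((r - ρ) ^ 2) ^ β)
          + (1 - lam) * (2 ^ (2 - 2*β) * ((r + ρ) ^ 2) ^ β) := by
        have b1 : (r ^ β - ρ ^ β) ^ 2 ≤ 2 ^ (2 - 2*β) * ((r - ρ) ^ 2) ^ β :=
          h1.trans (le_mul_of_one_le_left (Real.rpow_nonneg (sq_nonneg _) _) hC1)
        have := mul_le_mul_of_nonneg_left b1 hlam0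
        have := mul_le_mul_of_nonneg_left h2 (by linarith : (0:ℝ) ≤ 1 - lam)
        linarith
    _ = 2 ^ (2 - 2*β) * (lam * ((r - ρ) ^ 2) ^ β + (1 - lam) * ((r + ρ) ^ 2) ^ β) := by ring
    _ ≤ 2 ^ (2 - 2*β) * (lam * (r - ρ) ^ 2 + (1 - lam) * (r + ρ) ^ 2) ^ β :=
        mul_le_mul_of_nonneg_left step2 hcpos
    _ = 2 ^ (2 - 2*β) * (‖z - w‖ ^ 2) ^ β := by rw [id2, ← hzw2]
    _ = (2 ^ (1 - β) * ‖z - w‖ ^ β) ^ 2 := by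
        rw [mul_pow, hC2, pow2 _ (norm_nonneg _)]
  calc ‖gz - gw‖ = Real.sqrt (‖gz - gw‖ ^ 2) :=
        (Real.sqrt_sq (norm_nonneg _)).symm
  _ ≤ Real.sqrt ((2 ^ (1 - β) * ‖z - w‖ ^ β) ^ 2) := Real.sqrt_le_sqrt main2
  _ = 2 ^ (1 - β) * ‖z - w‖ ^ β := Real.sqrt_sq (by positivity)

theorem stmt8 (a b : ℂ) (q : ℝ) (hq1 : 2 < q) (hq2 : q < 4) (t : ℝ) (ht0 : 0 ≤ t) (ht1 : t ≤ 1) :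
    norm
        (((‖a + (t : ℂ) * (b - a)‖ ^ (q - 4) : ℝ) : ℂ)
            * (starRingEnd ℂ) ((a + (t : ℂ) * (b - a)) ^ 2)
          - ((‖a‖ ^ (q - 4) : ℝ) : ℂ) * (starRingEnd ℂ) (a ^ 2))
      ≤ 2 * (‖a‖ ^ (q / 2 - 1) + ‖b - a‖ ^ (q / 2 - 1))
          * ‖b - a‖ ^ (q / 2 - 1) := by
  have hb0 : 0 < q / 2 - 1 := by linarith
  have hb1 : q / 2 - 1 < 1 := by linarith
  set β := q / 2 - 1 with hβ
  set w := a + (t : ℂ) * (b - a) with hwdef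
  have key : ∀ u : ℂ, ((‖u‖ ^ (q - 4) : ℝ) : ℂ) * (starRingEnd ℂ) (u ^ 2)
      = ((‖u ^ 2‖ ^ (β - 1) : ℝ) : ℂ) * (starRingEnd ℂ) (u ^ 2) := by
    intro u
    congr 2
    rw [norm_pow, ← Real.rpow_natCast (‖u‖) 2,
      ← Real.rpow_mul (norm_nonneg u)]
    congr 1
    rw [hβ]
    push_cast
    ring
  rw [key w, key a]
  refine le_trans (my_holder hb0 hb1 (w ^ 2) (a ^ 2)) ?_
  set A := ‖a‖ with hAdef
  set h := ‖b - a‖ with hhdef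
  have hA0 : 0 ≤ A := norm_nonneg a
  have hh0 : 0 ≤ h := norm_nonneg _
  have hs : ‖w - a‖ ≤ h := by
    have e : w - a = (t : ℂ) * (b - a) := by rw [hwdef]; ring
    rw [e, norm_mul, Complex.norm_real, Real.norm_eq_abs, _root_.abs_of_nonneg ht0]
    nlinarith
  have hsum : ‖w + a‖ ≤ 2 * A + h := by
    have e : w + a = 2 * a + (t : ℂ) * (b - a) := by rw [hwdef]; ring
    rw [e]
    refine le_trans (norm_add_le _ _) ?_
    rw [norm_mul, norm_mul, Complex.norm_two, Complex.norm_real, Real.norm_eq_abs, _root_.abs_of_nonneg ht0]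
    nlinarith
  have hprod : ‖w ^ 2 - a ^ 2‖ ≤ h * (2 * A + h) := by
    have e : w ^ 2 - a ^ 2 = (w - a) * (w + a) := by ring
    rw [e, norm_mul]
    exact mul_le_mul hs hsum (norm_nonneg _) hh0
  have hstep : ‖w ^ 2 - a ^ 2‖ ^ β ≤ h ^ β * ((2 * A) ^ β + h ^ β) := by
    calc ‖w ^ 2 - a ^ 2‖ ^ β ≤ (h * (2 * A + h)) ^ β :=
          Real.rpow_le_rpow (norm_nonneg _) hprod hb0.le
    _ = h ^ β * (2 * A + h) ^ β := Real.mul_rpow hh0 (by positivity)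
    _ ≤ h ^ β * ((2 * A) ^ β + h ^ β) := by
          have hsub := my_rpow_subadd (x := 2 * A) (y := h) (by positivity) hh0 hb0.le hb1.le
          exact mul_le_mul_of_nonneg_left hsub (Real.rpow_nonneg hh0 _)
  have h2β : ((2:ℝ) * A) ^ β = 2 ^ β * A ^ β := Real.mul_rpow (by norm_num) hA0
  have hexp : (2:ℝ) ^ (1 - β) * 2 ^ β = 2 := by
    rw [← Real.rpow_add (by norm_num : (0:ℝ) < 2)]
    norm_num
  have hlt2 : (2:ℝ) ^ (1 - β) ≤ 2 := by
    calc (2:ℝ) ^ (1 - β) ≤ 2 ^ (1:ℝ) :=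
          Real.rpow_le_rpow_of_exponent_le (by norm_num) (by linarith)
    _ = 2 := Real.rpow_one 2
  have hpos : (0:ℝ) ≤ 2 ^ (1 - β) := by positivity
  calc 2 ^ (1 - β) * ‖w ^ 2 - a ^ 2‖ ^ β
      ≤ 2 ^ (1 - β) * (h ^ β * ((2 * A) ^ β + h ^ β)) :=
        mul_le_mul_of_nonneg_left hstep hpos
  _ = (2 ^ (1 - β) * 2 ^ β) * A ^ β * h ^ β + 2 ^ (1 - β) * (h ^ β * h ^ β) := by
        rw [h2β]; ring
  _ ≤ 2 * A ^ β * h ^ β + 2 * (h ^ β * h ^ β) := by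
        rw [hexp]
        have h1 : (0:ℝ) ≤ h ^ β * h ^ β := mul_nonneg (Real.rpow_nonneg hh0 _) (Real.rpow_nonneg hh0 _)
        nlinarith
  _ = 2 * (A ^ β + h ^ β) * h ^ β := by ring
end

section
/- Let h be holomorphic on the disc D_R of radius R centered at 0 in ℂ, and let 0 < r < R. Then sup_{|z|≤r} |h(z)| ≤ (2r/(R−r))·sup_{|z|≤R} Im h(z) + ((R+r)/(R−r))·|h(0)|. -/
open Metric Complex

lemma bc_core (R r : ℝ) (hr : 0 < r) (hrR : r < R) (f : ℂ → ℂ)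
    (hf : DifferentiableOn ℂ f (Metric.ball 0 R)) (hf0 : f 0 = 0) (A : ℝ) (hA : 0 < A)
    (hIm : ∀ z ∈ Metric.ball (0 : ℂ) R, (f z).im ≤ A) :
    ∀ z ∈ Metric.closedBall (0 : ℂ) r, ‖f z‖ ≤ 2 * r / (R - r) * A := by
  have hR : (0:ℝ) < R := hr.trans hrR
  set c : ℂ := 2 * A * Complex.I with hc
  have him : ∀ z ∈ Metric.ball (0 : ℂ) R, (c - f z).im = 2 * A - (f z).im := by
    intro z _; simp [hc]
  have hden : ∀ z ∈ Metric.ball (0 : ℂ) R, c - f z ≠ 0 := by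
    intro z hz hzero
    have h2 : (f z).im ≤ A := hIm z hz
    have : (c - f z).im > 0 := by rw [him z hz]; linarith
    rw [hzero] at this; simp at this
  set g : ℂ → ℂ := fun z => f z / (c - f z) with hg
  have hgd : DifferentiableOn ℂ g (Metric.ball 0 R) :=
    hf.div ((differentiableOn_const c).sub hf) hden
  have hg0 : g 0 = 0 := by simp [hg, hf0]
  have hgle : ∀ z ∈ Metric.ball (0 : ℂ) R, ‖g z‖ ≤ 1 := by
    intro z hz
    have hd := hden z hz
    rw [hg]
    simp only [norm_div]
    rw [div_le_one (norm_pos_iff.mpr hd)]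
    have e1 : ‖c - f z‖ ^ 2 = (c - f z).re^2 + (c - f z).im^2 := by
      rw [Complex.sq_norm, Complex.normSq_apply]; ring
    have e2 : ‖f z‖ ^ 2 = (f z).re^2 + (f z).im^2 := by
      rw [Complex.sq_norm, Complex.normSq_apply]; ring
    have h1 : (c - f z).re = -(f z).re := by simp [hc]
    have himf := hIm z hz
    have key : ‖f z‖ ^ 2 ≤ ‖c - f z‖ ^ 2 := by
      rw [e1, e2, h1, him z hz]; nlinarith
    nlinarith [norm_nonneg (f z), norm_nonneg (c - f z)]
  -- Schwarz lemma consequence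
  intro z hz
  have hzR : z ∈ Metric.ball (0 : ℂ) R := by
    rw [Metric.mem_closedBall] at hz; rw [Metric.mem_ball]; exact lt_of_le_of_lt hz hrR
  have hgz : ‖g z‖ ≤ r / R := by
    apply le_of_forall_pos_le_add
    intro ε hε
    set δ : ℝ := ε * R / r with hδ
    have hδ0 : 0 < δ := by positivity
    have hmaps : Set.MapsTo g (Metric.ball 0 R) (Metric.ball (g 0) (1 + δ)) := by
      intro w hw
      rw [hg0, Metric.mem_ball, dist_zero_right]
      calc ‖g w‖ ≤ 1 := hgle w hw
      _ < 1 + δ := by linarith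
    have hsch := Complex.dist_le_div_mul_dist_of_mapsTo_ball hgd (hmaps.mono_right Metric.ball_subset_closedBall) hzR
    rw [hg0] at hsch
    simp only [Complex.dist_eq, sub_zero] at hsch
    have hzr : ‖z‖ ≤ r := by rwa [Metric.mem_closedBall, dist_zero_right] at hz
    calc ‖g z‖ ≤ (1 + δ) / R * ‖z‖ := hsch
    _ ≤ (1 + δ) / R * r := by
        apply mul_le_mul_of_nonneg_left hzr (by positivity)
    _ = r / R + ε := by rw [hδ]; field_simp
  have hfe : f z * (1 + g z) = c * g z := by
    have hd := hden z hzR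
    simp only [hg]
    field_simp
    ring
  have h1g : 1 - r / R ≤ ‖1 + g z‖ := by
    have h2 : (1:ℝ) ≤ ‖1 + g z‖ + ‖g z‖ := by
      simpa using norm_add_le (1 + g z) (-(g z))
    linarith
  have hrR1 : (0:ℝ) < 1 - r / R := by
    rw [sub_pos, div_lt_one hR]; exact hrR
  have hcabs : ‖c‖ = 2 * A := by
    simp [hc, Complex.norm_def, Complex.normSq_apply]
    exact hA.le
  have habs : ‖f z‖ * (1 - r / R) ≤ 2 * A * (r / R) := by
    have e : ‖f z‖ * ‖1 + g z‖ = ‖c‖ * ‖g z‖ := by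
      rw [← norm_mul, ← norm_mul, hfe]
    calc ‖f z‖ * (1 - r / R) ≤ ‖f z‖ * ‖1 + g z‖ :=
          mul_le_mul_of_nonneg_left h1g (norm_nonneg _)
    _ = ‖c‖ * ‖g z‖ := e
    _ ≤ 2 * A * (r / R) := by
        rw [hcabs]
        exact mul_le_mul_of_nonneg_left hgz (by positivity)
  have : ‖f z‖ ≤ 2 * A * (r / R) / (1 - r / R) := (le_div_iff₀ hrR1).mpr habs
  calc ‖f z‖ ≤ 2 * A * (r / R) / (1 - r / R) := this
  _ = 2 * r / (R - r) * A := by field_simp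

theorem stmt11 (R r : ℝ) (hr : 0 < r) (hrR : r < R) (h : ℂ → ℂ)
    (hh : DifferentiableOn ℂ h (Metric.ball 0 R)) (M : ℝ)
    (hM : ∀ z ∈ Metric.ball (0 : ℂ) R, (h z).im ≤ M) :
    ∀ z ∈ Metric.closedBall (0 : ℂ) r,
      ‖h z‖ ≤ 2 * r / (R - r) * M + (R + r) / (R - r) * ‖h 0‖ := by
  have hR : (0:ℝ) < R := hr.trans hrR
  have h0mem : (0:ℂ) ∈ Metric.ball (0:ℂ) R := by simp [hR]
  have hA0 : 0 ≤ M - (h 0).im := by linarith [hM 0 h0mem]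
  set f : ℂ → ℂ := fun z => h z - h 0 with hfdef
  have hf : DifferentiableOn ℂ f (Metric.ball 0 R) := hh.sub (differentiableOn_const _)
  have hf0 : f 0 = 0 := by simp [hfdef]
  intro z hz
  have hrRpos : (0:ℝ) < R - r := by linarith
  have hfz : ‖f z‖ ≤ 2 * r / (R - r) * (M - (h 0).im) := by
    apply le_of_forall_pos_le_add
    intro ε hε
    set δ : ℝ := ε * (R - r) / (2 * r) with hδ
    have hδ0 : 0 < δ := by positivity
    have hIm : ∀ w ∈ Metric.ball (0:ℂ) R, (f w).im ≤ (M - (h 0).im) + δ := by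
      intro w hw
      have := hM w hw
      simp only [hfdef, Complex.sub_im]
      linarith
    have := bc_core R r hr hrR f hf hf0 ((M - (h 0).im) + δ) (by linarith) hIm z hz
    calc ‖f z‖ ≤ 2 * r / (R - r) * ((M - (h 0).im) + δ) := this
    _ = 2 * r / (R - r) * (M - (h 0).im) + ε := by rw [hδ]; field_simp
  have htri : ‖h z‖ ≤ ‖f z‖ + ‖h 0‖ := by
    have : h z = f z + h 0 := by simp [hfdef]
    rw [this]
    exact norm_add_le _ _
  have him0 : -(h 0).im ≤ ‖h 0‖ := by
    have := Complex.abs_im_le_norm (h 0)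
    have := abs_le.mp (le_refl |(h 0).im|)
    linarith [neg_abs_le ((h 0).im), Complex.abs_im_le_norm (h 0)]
  have hc : (0:ℝ) ≤ 2 * r / (R - r) := by positivity
  calc ‖h z‖ ≤ ‖f z‖ + ‖h 0‖ := htri
  _ ≤ 2 * r / (R - r) * (M - (h 0).im) + ‖h 0‖ := by linarith
  _ ≤ 2 * r / (R - r) * M + 2 * r / (R - r) * ‖h 0‖ + ‖h 0‖ := by
      nlinarith [mul_le_mul_of_nonneg_left him0 hc]
  _ = 2 * r / (R - r) * M + (R + r) / (R - r) * ‖h 0‖ := by field_simp; ring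
end

section
/- Let Ω ⊂ ℂⁿ be a bounded domain, 1 ≤ p < ∞, and z, z' ∈ Ω. Define Ĥ_p(z,z') = K_p(z)^{p−1} + K_p(z')^{p−1} − Re{K_p(z)^{p−2}·K_p(z,z') + K_p(z')^{p−2}·K_p(z',z)}. Then for p > 2, ∫_Ω |K_p(·,z) − K_p(·,z')|^p ≤ 2^{p−1}·Ĥ_p(z,z'). -/
open MeasureTheory Complex


lemma aux_ptwise {p A B D T : ℝ} (hp : 2 < p) (hA : 0 ≤ A) (hB : 0 ≤ B)
    (hD : 0 ≤ D) (hT : D ^ (2:ℝ) = B ^ (2:ℝ) + A ^ (2:ℝ) - 2 * T)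
    (hDab : D ≤ A + B) :
    D ^ p ≤ 2 ^ (p-1) * (B ^ p + A ^ p - (B ^ (p-2) + A ^ (p-2)) * T) := by
  have hpne : p ≠ 0 := by linarith
  have h2 : (0:ℝ) ≤ p - 2 := by linarith
  have hsplit : ∀ x : ℝ, 0 ≤ x → x ^ p = x ^ (p-2) * x ^ (2:ℝ) := fun x hx => by
    rw [← Real.rpow_add' hx (by simpa using hpne)]; norm_num
  have hTval : T = (B ^ (2:ℝ) + A ^ (2:ℝ) - D ^ (2:ℝ)) / 2 := by linarith
  set Bq := B ^ (p-2) with hBq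
  set Aq := A ^ (p-2) with hAq
  have key : B ^ p + A ^ p - (Bq + Aq) * T
      = (Bq + Aq) * D ^ (2:ℝ) / 2 + (Bq - Aq) * (B ^ (2:ℝ) - A ^ (2:ℝ)) / 2 := by
    rw [hTval, hsplit B hB, hsplit A hA]; ring
  have hmono : 0 ≤ (Bq - Aq) * (B ^ (2:ℝ) - A ^ (2:ℝ)) := by
    rcases le_total A B with h | h
    · have h1 : Aq ≤ Bq := Real.rpow_le_rpow hA h h2
      have h2' : A ^ (2:ℝ) ≤ B ^ (2:ℝ) := Real.rpow_le_rpow hA h (by norm_num)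
      nlinarith
    · have h1 : Bq ≤ Aq := Real.rpow_le_rpow hB h h2
      have h2' : B ^ (2:ℝ) ≤ A ^ (2:ℝ) := Real.rpow_le_rpow hB h (by norm_num)
      nlinarith
  have hmax : (D/2) ^ (p-2) ≤ Bq + Aq := by
    have hAqn : 0 ≤ Aq := Real.rpow_nonneg hA _
    have hBqn : 0 ≤ Bq := Real.rpow_nonneg hB _
    rcases le_total A B with h | h
    · have hdb : D / 2 ≤ B := by linarith
      have := Real.rpow_le_rpow (by linarith) hdb h2
      rw [← hBq] at this; linarith
    · have hdb : D / 2 ≤ A := by linarith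
      have := Real.rpow_le_rpow (by linarith) hdb h2
      rw [← hAq] at this; linarith
  have hD2 : (0:ℝ) ≤ D ^ (2:ℝ) := Real.rpow_nonneg hD _
  have hfrac : (D/2) ^ (p-2) = D ^ (p-2) / 2 ^ (p-2) :=
    Real.div_rpow hD (by norm_num) _
  have h2p2pos : (0:ℝ) < 2 ^ (p-2) := Real.rpow_pos_of_pos two_pos _
  have h2p1pos : (0:ℝ) < 2 ^ (p-1) := Real.rpow_pos_of_pos two_pos _
  have h2p1 : (2:ℝ) ^ (p-1) = 2 ^ (p-2) * 2 := by
    rw [show p - 1 = (p-2) + 1 by ring, Real.rpow_add two_pos, Real.rpow_one]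
  have hS : (D ^ (p-2) / 2 ^ (p-2)) * D ^ (2:ℝ) / 2
      ≤ B ^ p + A ^ p - (Bq + Aq) * T := by
    rw [key, ← hfrac]
    nlinarith [mul_le_mul_of_nonneg_right hmax hD2]
  calc D ^ p = 2 ^ (p-1) * ((D ^ (p-2) / 2 ^ (p-2)) * D ^ (2:ℝ) / 2) := by
        rw [hsplit D hD, h2p1]; field_simp
    _ ≤ 2 ^ (p-1) * (B ^ p + A ^ p - (Bq + Aq) * T) :=
        mul_le_mul_of_nonneg_left hS h2p1pos.le

lemma aux_mul_self {p x : ℝ} (hp : 2 < p) (hx : 0 ≤ x) : x ^ (p-1) * x = x ^ p := by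
  have h := Real.rpow_add' hx (y := p-1) (z := 1) (by intro h'; linarith)
  rw [Real.rpow_one, show p - 1 + 1 = p by ring] at h
  exact h.symm

lemma aux_cross {p x y : ℝ} (hp : 2 < p) (hx : 0 ≤ x) (hy : 0 ≤ y) :
    x ^ (p-2) * (x * y) ≤ x ^ p + y ^ p := by
  have h1 : x ^ (p-2) * (x * y) = x ^ (p-1) * y := by
    have h := Real.rpow_add' hx (y := p-2) (z := 1) (by intro h'; linarith)
    rw [Real.rpow_one, show p - 2 + 1 = p - 1 by ring] at h
    rw [h]; ring
  rw [h1]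
  rcases le_total y x with h | h
  · have : x ^ (p-1) * y ≤ x ^ (p-1) * x :=
      mul_le_mul_of_nonneg_left h (Real.rpow_nonneg hx _)
    have hxx := aux_mul_self hp hx
    have hyp : 0 ≤ y ^ p := Real.rpow_nonneg hy _
    linarith
  · have h1' : x ^ (p-1) ≤ y ^ (p-1) := Real.rpow_le_rpow hx h (by linarith)
    have : x ^ (p-1) * y ≤ y ^ (p-1) * y := mul_le_mul_of_nonneg_right h1' hy
    have hyy := aux_mul_self hp hy
    have hxp : 0 ≤ x ^ p := Real.rpow_nonneg hx _
    linarith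

lemma aux_main {α : Type*} [MeasurableSpace α] (μ : Measure α) {p : ℝ} (hp : 2 < p)
    (b a : α → ℂ)
    (hbp : Integrable (fun ζ => ‖b ζ‖ ^ p) μ)
    (hap : Integrable (fun ζ => ‖a ζ‖ ^ p) μ)
    (hdp : Integrable (fun ζ => ‖b ζ - a ζ‖ ^ p) μ)
    (P Q : α → ℂ) (c₁ c₂ : ℝ)
    (hPint : Integrable P μ) (hQint : Integrable Q μ)
    (hPre : ∀ ζ, c₁ * (P ζ).re
      = ‖b ζ‖ ^ (p-2) * ((starRingEnd ℂ) (b ζ) * a ζ).re)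
    (hQre : ∀ ζ, c₂ * (Q ζ).re
      = ‖a ζ‖ ^ (p-2) * ((starRingEnd ℂ) (b ζ) * a ζ).re) :
    ∫ ζ, ‖b ζ - a ζ‖ ^ p ∂μ
      ≤ 2 ^ (p-1) * (∫ ζ, ‖b ζ‖ ^ p ∂μ + ∫ ζ, ‖a ζ‖ ^ p ∂μ
          - (c₁ * (∫ ζ, P ζ ∂μ).re + c₂ * (∫ ζ, Q ζ ∂μ).re)) := by
  have hpne : p ≠ 0 := by linarith
  have hp2 : (0:ℝ) ≤ p - 2 := by linarith
  set Bf : α → ℝ := fun ζ => ‖b ζ‖ with hBf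
  set Af : α → ℝ := fun ζ => ‖a ζ‖ with hAf
  set Df : α → ℝ := fun ζ => ‖b ζ - a ζ‖ with hDf
  set Tf : α → ℝ := fun ζ => ((starRingEnd ℂ) (b ζ) * a ζ).re with hTf
  have hBn : ∀ ζ, 0 ≤ Bf ζ := fun ζ => norm_nonneg _
  have hAn : ∀ ζ, 0 ≤ Af ζ := fun ζ => norm_nonneg _
  have hDn : ∀ ζ, 0 ≤ Df ζ := fun ζ => norm_nonneg _
  -- a.e.-measurability of the absolute values
  have haesm : ∀ g : α → ℝ, (∀ ζ, 0 ≤ g ζ) → Integrable (fun ζ => g ζ ^ p) μ →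
      AEStronglyMeasurable g μ := by
    intro g hg hi
    have h1 : g = fun ζ => (g ζ ^ p) ^ p⁻¹ :=
      funext fun ζ => (Real.rpow_rpow_inv (hg ζ) hpne).symm
    rw [h1]
    exact (Real.continuous_rpow_const (by positivity)).comp_aestronglyMeasurable
      hi.aestronglyMeasurable
  have hBm := haesm Bf hBn hbp
  have hAm := haesm Af hAn hap
  have hDm := haesm Df hDn hdp
  -- key pointwise identity for T
  have hr2 : ∀ x : ℝ, x ^ (2:ℝ) = x ^ (2:ℕ) := fun x => by
    rw [show (2:ℝ) = ((2:ℕ):ℝ) by norm_num, Real.rpow_natCast]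
  have hTid : ∀ ζ, Df ζ ^ (2:ℝ) = Bf ζ ^ (2:ℝ) + Af ζ ^ (2:ℝ) - 2 * Tf ζ := by
    intro ζ
    rw [hr2, hr2, hr2]
    simp only [hBf, hAf, hDf, hTf]
    rw [Complex.sq_norm, Complex.sq_norm, Complex.sq_norm, Complex.normSq_sub]
    have : ((starRingEnd ℂ) (b ζ) * a ζ).re = (b ζ * (starRingEnd ℂ) (a ζ)).re := by
      rw [← Complex.conj_re (b ζ * (starRingEnd ℂ) (a ζ))]; simp [mul_comm]
    rw [this]
  have hTm : AEStronglyMeasurable Tf μ := by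
    have h1 : Tf = fun ζ => (Bf ζ ^ (2:ℝ) + Af ζ ^ (2:ℝ) - Df ζ ^ (2:ℝ)) * 2⁻¹ :=
      funext fun ζ => by have := hTid ζ; linarith
    rw [h1]
    have hc : Continuous (fun x : ℝ => x ^ (2:ℝ)) := Real.continuous_rpow_const (by norm_num)
    exact ((((hc.comp_aestronglyMeasurable hBm).add
      (hc.comp_aestronglyMeasurable hAm)).sub
      (hc.comp_aestronglyMeasurable hDm)).mul aestronglyMeasurable_const)
  have hTabs : ∀ ζ, |Tf ζ| ≤ Bf ζ * Af ζ := by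
    intro ζ
    calc |Tf ζ| ≤ ‖(starRingEnd ℂ) (b ζ) * a ζ‖ := Complex.abs_re_le_norm _
      _ = Bf ζ * Af ζ := by simp [map_mul, hBf, hAf]
  set Sf : α → ℝ := fun ζ => Bf ζ ^ p + Af ζ ^ p - (Bf ζ ^ (p-2) + Af ζ ^ (p-2)) * Tf ζ
    with hSf
  have hrpc : Continuous (fun x : ℝ => x ^ (p-2)) := Real.continuous_rpow_const hp2
  have hrpp : Continuous (fun x : ℝ => x ^ p) := Real.continuous_rpow_const (by linarith)
  have hSm : AEStronglyMeasurable Sf μ := by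
    exact ((hrpp.comp_aestronglyMeasurable hBm).add
      (hrpp.comp_aestronglyMeasurable hAm)).sub
      (((hrpc.comp_aestronglyMeasurable hBm).add
        (hrpc.comp_aestronglyMeasurable hAm)).mul hTm)
  have hSbound : ∀ ζ, ‖Sf ζ‖ ≤ 3 * (Bf ζ ^ p + Af ζ ^ p) := by
    intro ζ
    have h1 : |(Bf ζ ^ (p-2) + Af ζ ^ (p-2)) * Tf ζ|
        ≤ (Bf ζ ^ (p-2) + Af ζ ^ (p-2)) * (Bf ζ * Af ζ) := by
      rw [abs_mul, _root_.abs_of_nonneg (by positivity :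
        (0:ℝ) ≤ Bf ζ ^ (p-2) + Af ζ ^ (p-2))]
      exact mul_le_mul_of_nonneg_left (hTabs ζ) (by positivity)
    have h2 : Bf ζ ^ (p-2) * (Bf ζ * Af ζ) ≤ Bf ζ ^ p + Af ζ ^ p :=
      aux_cross hp (hBn ζ) (hAn ζ)
    have h3 : Af ζ ^ (p-2) * (Af ζ * Bf ζ) ≤ Af ζ ^ p + Bf ζ ^ p :=
      aux_cross hp (hAn ζ) (hBn ζ)
    have h4 : (0:ℝ) ≤ Bf ζ ^ p := Real.rpow_nonneg (hBn ζ) _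
    have h5 : (0:ℝ) ≤ Af ζ ^ p := Real.rpow_nonneg (hAn ζ) _
    simp only [Real.norm_eq_abs, hSf]
    rw [abs_le]
    constructor <;>
      nlinarith [h1, h2, h3, h4, h5,
        le_abs_self ((Bf ζ ^ (p-2) + Af ζ ^ (p-2)) * Tf ζ),
        neg_abs_le ((Bf ζ ^ (p-2) + Af ζ ^ (p-2)) * Tf ζ)]
  have hSint : Integrable Sf μ :=
    Integrable.mono' ((hbp.add hap).const_mul 3) hSm (ae_of_all _ hSbound)
  -- pointwise estimate and integration
  have hmain : ∫ ζ, Df ζ ^ p ∂μ ≤ ∫ ζ, 2 ^ (p-1) * Sf ζ ∂μ := by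
    refine integral_mono hdp (hSint.const_mul _) fun ζ => ?_
    refine aux_ptwise hp (hAn ζ) (hBn ζ) (hDn ζ) (hTid ζ) ?_
    have : ‖b ζ - a ζ‖ ≤ ‖b ζ‖ + ‖a ζ‖ := norm_sub_le _ _
    simp only [hDf, hAf, hBf]
    linarith
  rw [integral_const_mul] at hmain
  -- identify ∫ Sf
  have hBTint : Integrable (fun ζ => Bf ζ ^ (p-2) * Tf ζ) μ := by
    have h := (hPint.re).const_mul c₁
    have heq : (fun ζ => c₁ * RCLike.re (P ζ)) = fun ζ => Bf ζ ^ (p-2) * Tf ζ :=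
      funext fun ζ => hPre ζ
    rwa [heq] at h
  have hATint : Integrable (fun ζ => Af ζ ^ (p-2) * Tf ζ) μ := by
    have h := (hQint.re).const_mul c₂
    have heq : (fun ζ => c₂ * RCLike.re (Q ζ)) = fun ζ => Af ζ ^ (p-2) * Tf ζ :=
      funext fun ζ => hQre ζ
    rwa [heq] at h
  have hReP : c₁ * (∫ ζ, P ζ ∂μ).re = ∫ ζ, Bf ζ ^ (p-2) * Tf ζ ∂μ := by
    rw [show (∫ ζ, P ζ ∂μ).re = RCLike.re (∫ ζ, P ζ ∂μ) from rfl, ← integral_re hPint,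
      ← integral_const_mul]
    exact integral_congr_ae (ae_of_all _ fun ζ => hPre ζ)
  have hReQ : c₂ * (∫ ζ, Q ζ ∂μ).re = ∫ ζ, Af ζ ^ (p-2) * Tf ζ ∂μ := by
    rw [show (∫ ζ, Q ζ ∂μ).re = RCLike.re (∫ ζ, Q ζ ∂μ) from rfl, ← integral_re hQint,
      ← integral_const_mul]
    exact integral_congr_ae (ae_of_all _ fun ζ => hQre ζ)
  have hSeq : ∫ ζ, Sf ζ ∂μ
      = ∫ ζ, Bf ζ ^ p ∂μ + ∫ ζ, Af ζ ^ p ∂μ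
        - (∫ ζ, Bf ζ ^ (p-2) * Tf ζ ∂μ + ∫ ζ, Af ζ ^ (p-2) * Tf ζ ∂μ) := by
    calc ∫ ζ, Sf ζ ∂μ
        = ∫ ζ, ((Bf ζ ^ p + Af ζ ^ p)
            - (Bf ζ ^ (p-2) * Tf ζ + Af ζ ^ (p-2) * Tf ζ)) ∂μ :=
          integral_congr_ae (ae_of_all _ fun ζ => by simp only [hSf]; ring)
      _ = (∫ ζ, (Bf ζ ^ p + Af ζ ^ p) ∂μ)
            - ∫ ζ, (Bf ζ ^ (p-2) * Tf ζ + Af ζ ^ (p-2) * Tf ζ) ∂μ :=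
          integral_sub (hbp.add hap) (hBTint.add hATint)
      _ = ∫ ζ, Bf ζ ^ p ∂μ + ∫ ζ, Af ζ ^ p ∂μ
            - (∫ ζ, Bf ζ ^ (p-2) * Tf ζ ∂μ + ∫ ζ, Af ζ ^ (p-2) * Tf ζ ∂μ) := by
          rw [integral_add hbp hap, integral_add hBTint hATint]
  rw [hReP, hReQ]
  calc ∫ ζ, Df ζ ^ p ∂μ ≤ 2 ^ (p-1) * ∫ ζ, Sf ζ ∂μ := hmain
    _ = _ := by rw [hSeq]

theorem stmt13 {n : ℕ} (Ω : Set (Fin n → ℂ)) (hΩb : Bornology.IsBounded Ω)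
    (p : ℝ) (hp : 2 < p) (z z' : Fin n → ℂ) (hz : z ∈ Ω) (hz' : z' ∈ Ω)
    -- `m ζ w` is the minimizer `m_p(ζ, w)`, `Kd w = K_p(w)`, `Koff ζ w = K_p(ζ, w)`
    (m : (Fin n → ℂ) → (Fin n → ℂ) → ℂ) (Kd : (Fin n → ℂ) → ℝ)
    (Koff : (Fin n → ℂ) → (Fin n → ℂ) → ℂ)
    (hKoff : ∀ ζ w, Koff ζ w = m ζ w * (Kd w : ℂ))
    (hKdpos : ∀ w ∈ Ω, 0 < Kd w)
    (hmholo : ∀ w ∈ Ω, DifferentiableOn ℂ (fun ζ => m ζ w) Ω)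
    (hmval : ∀ w ∈ Ω, m w w = 1)
    (hKdval : ∀ w ∈ Ω, Kd w * (∫ ζ in Ω, ‖m ζ w‖ ^ p) = 1)
    -- the reproducing formula on `A^p(Ω)`
    (hrep : ∀ w ∈ Ω, ∀ f : (Fin n → ℂ) → ℂ, DifferentiableOn ℂ f Ω →
      Integrable (fun ζ => ‖f ζ‖ ^ p) (volume.restrict Ω) →
      f w = ∫ ζ in Ω,
        ((‖m ζ w‖ ^ (p - 2) : ℝ) : ℂ) * (starRingEnd ℂ) (Koff ζ w) * f ζ)
    (hintK : ∀ w ∈ Ω, Integrable (fun ζ => ‖Koff ζ w‖ ^ p) (volume.restrict Ω))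
    (hint2 : Integrable (fun ζ => ‖Koff ζ z - Koff ζ z'‖ ^ p)
      (volume.restrict Ω)) :
    (∫ ζ in Ω, ‖Koff ζ z - Koff ζ z'‖ ^ p)
      ≤ 2 ^ (p - 1) *
        (Kd z ^ (p - 1) + Kd z' ^ (p - 1)
          - (((Kd z ^ (p - 2) : ℝ) : ℂ) * Koff z z'
              + ((Kd z' ^ (p - 2) : ℝ) : ℂ) * Koff z' z).re) := by
  have hKz := hKdpos z hz
  have hKz' := hKdpos z' hz'
  have hpne : p ≠ 0 := by linarith
  -- holomorphy
  have hb_eq : (fun ζ => Koff ζ z) = fun ζ => m ζ z * ((Kd z : ℝ) : ℂ) :=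
    funext fun ζ => hKoff ζ z
  have ha_eq : (fun ζ => Koff ζ z') = fun ζ => m ζ z' * ((Kd z' : ℝ) : ℂ) :=
    funext fun ζ => hKoff ζ z'
  have hbholo : DifferentiableOn ℂ (fun ζ => Koff ζ z) Ω := by
    rw [hb_eq]; exact (hmholo z hz).mul_const _
  have haholo : DifferentiableOn ℂ (fun ζ => Koff ζ z') Ω := by
    rw [ha_eq]; exact (hmholo z' hz').mul_const _
  have hdholo : DifferentiableOn ℂ (fun ζ => Koff ζ z - Koff ζ z') Ω := hbholo.sub haholo
  -- abs relations
  have habsb : ∀ ζ, ‖Koff ζ z‖ = ‖m ζ z‖ * Kd z := fun ζ => by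
    rw [hKoff, norm_mul, Complex.norm_real, Real.norm_eq_abs, abs_of_pos hKz]
  have habsa : ∀ ζ, ‖Koff ζ z'‖ = ‖m ζ z'‖ * Kd z' := fun ζ => by
    rw [hKoff, norm_mul, Complex.norm_real, Real.norm_eq_abs, abs_of_pos hKz']
  -- diagonal values
  have hKzz : Koff z z = ((Kd z : ℝ) : ℂ) := by rw [hKoff z z, hmval z hz, one_mul]
  have hKz'z' : Koff z' z' = ((Kd z' : ℝ) : ℂ) := by rw [hKoff z' z', hmval z' hz', one_mul]
  -- reproducing formula instances
  have hrepP : Koff z z' = ∫ ζ in Ω, ((‖m ζ z‖ ^ (p - 2) : ℝ) : ℂ)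
      * (starRingEnd ℂ) (Koff ζ z) * Koff ζ z' :=
    hrep z hz (fun ζ => Koff ζ z') haholo (hintK z' hz')
  have hrepD : Koff z z - Koff z z' = ∫ ζ in Ω, ((‖m ζ z‖ ^ (p - 2) : ℝ) : ℂ)
      * (starRingEnd ℂ) (Koff ζ z) * (Koff ζ z - Koff ζ z') :=
    hrep z hz (fun ζ => Koff ζ z - Koff ζ z') hdholo hint2
  have hrepQ : Koff z' z = ∫ ζ in Ω, ((‖m ζ z'‖ ^ (p - 2) : ℝ) : ℂ)
      * (starRingEnd ℂ) (Koff ζ z') * Koff ζ z :=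
    hrep z' hz' (fun ζ => Koff ζ z) hbholo (hintK z hz)
  have hrepD' : Koff z' z - Koff z' z' = ∫ ζ in Ω, ((‖m ζ z'‖ ^ (p - 2) : ℝ) : ℂ)
      * (starRingEnd ℂ) (Koff ζ z') * (Koff ζ z - Koff ζ z') :=
    hrep z' hz' (fun ζ => Koff ζ z - Koff ζ z') hdholo hint2
  -- integrability of |m .. |^p
  have hr2 : ∀ x : ℝ, x ^ (2:ℝ) = x ^ (2:ℕ) := fun x => by
    rw [show (2:ℝ) = ((2:ℕ):ℝ) by norm_num, Real.rpow_natCast]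
  have hMsplit : ∀ x : ℝ, 0 ≤ x → x ^ (p-2) * x ^ (2:ℝ) = x ^ p := fun x hx => by
    rw [← Real.rpow_add' hx (by intro h'; simp at h'; linarith)]; norm_num
  have hMp : Integrable (fun ζ => ‖m ζ z‖ ^ p) (volume.restrict Ω) := by
    have h : (fun ζ => ‖m ζ z‖ ^ p)
        = fun ζ => (Kd z ^ p)⁻¹ * (‖Koff ζ z‖ ^ p) := funext fun ζ => by
      rw [habsb ζ, Real.mul_rpow (norm_nonneg _) hKz.le]
      have : Kd z ^ p ≠ 0 := ne_of_gt (Real.rpow_pos_of_pos hKz _)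
      field_simp
    rw [h]; exact (hintK z hz).const_mul _
  have hMp' : Integrable (fun ζ => ‖m ζ z'‖ ^ p) (volume.restrict Ω) := by
    have h : (fun ζ => ‖m ζ z'‖ ^ p)
        = fun ζ => (Kd z' ^ p)⁻¹ * (‖Koff ζ z'‖ ^ p) := funext fun ζ => by
      rw [habsa ζ, Real.mul_rpow (norm_nonneg _) hKz'.le]
      have : Kd z' ^ p ≠ 0 := ne_of_gt (Real.rpow_pos_of_pos hKz' _)
      field_simp
    rw [h]; exact (hintK z' hz').const_mul _
  -- integrability of diagonal integrands
  have hGint : Integrable (fun ζ => ((‖m ζ z‖ ^ (p - 2) : ℝ) : ℂ)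
      * (starRingEnd ℂ) (Koff ζ z) * Koff ζ z) (volume.restrict Ω) := by
    have h : (fun ζ => ((‖m ζ z‖ ^ (p - 2) : ℝ) : ℂ)
        * (starRingEnd ℂ) (Koff ζ z) * Koff ζ z)
        = fun ζ => (((Kd z ^ (2:ℝ) * (‖m ζ z‖ ^ p) : ℝ)) : ℂ) :=
      funext fun ζ => by
        rw [mul_assoc, show (starRingEnd ℂ) (Koff ζ z) * Koff ζ z
            = ((Complex.normSq (Koff ζ z) : ℝ) : ℂ) from by rw [mul_comm, Complex.mul_conj],
          ← Complex.ofReal_mul]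
        congr 1
        rw [← Complex.sq_norm, habsb ζ, mul_pow, ← hr2, ← hr2, ← hMsplit _ (norm_nonneg _)]
        ring
    rw [h]
    exact Integrable.ofReal (hMp.const_mul _)
  have hG'int : Integrable (fun ζ => ((‖m ζ z'‖ ^ (p - 2) : ℝ) : ℂ)
      * (starRingEnd ℂ) (Koff ζ z') * Koff ζ z') (volume.restrict Ω) := by
    have h : (fun ζ => ((‖m ζ z'‖ ^ (p - 2) : ℝ) : ℂ)
        * (starRingEnd ℂ) (Koff ζ z') * Koff ζ z')
        = fun ζ => (((Kd z' ^ (2:ℝ) * (‖m ζ z'‖ ^ p) : ℝ)) : ℂ) :=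
      funext fun ζ => by
        rw [mul_assoc, show (starRingEnd ℂ) (Koff ζ z') * Koff ζ z'
            = ((Complex.normSq (Koff ζ z') : ℝ) : ℂ) from by rw [mul_comm, Complex.mul_conj],
          ← Complex.ofReal_mul]
        congr 1
        rw [← Complex.sq_norm, habsa ζ, mul_pow, ← hr2, ← hr2, ← hMsplit _ (norm_nonneg _)]
        ring
    rw [h]
    exact Integrable.ofReal (hMp'.const_mul _)
  -- integrability of the cross integrands (by contradiction, via the reproducing formula)
  have hPint : Integrable (fun ζ => ((‖m ζ z‖ ^ (p - 2) : ℝ) : ℂ)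
      * (starRingEnd ℂ) (Koff ζ z) * Koff ζ z') (volume.restrict Ω) := by
    by_contra hnot
    have h0 : Koff z z' = 0 := by rw [hrepP, integral_undef hnot]
    have hsub : (fun ζ => ((‖m ζ z‖ ^ (p - 2) : ℝ) : ℂ)
        * (starRingEnd ℂ) (Koff ζ z) * (Koff ζ z - Koff ζ z'))
        = fun ζ => (((‖m ζ z‖ ^ (p - 2) : ℝ) : ℂ)
          * (starRingEnd ℂ) (Koff ζ z) * Koff ζ z)
          - (((‖m ζ z‖ ^ (p - 2) : ℝ) : ℂ)
          * (starRingEnd ℂ) (Koff ζ z) * Koff ζ z') := funext fun ζ => by ring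
    have hnot2 : ¬ Integrable (fun ζ => ((‖m ζ z‖ ^ (p - 2) : ℝ) : ℂ)
        * (starRingEnd ℂ) (Koff ζ z) * (Koff ζ z - Koff ζ z')) (volume.restrict Ω) := by
      intro hcon
      rw [hsub] at hcon
      have h2 : Integrable (fun ζ => (((‖m ζ z‖ ^ (p - 2) : ℝ) : ℂ)
          * (starRingEnd ℂ) (Koff ζ z) * Koff ζ z)
          - ((((‖m ζ z‖ ^ (p - 2) : ℝ) : ℂ)
            * (starRingEnd ℂ) (Koff ζ z) * Koff ζ z)
            - (((‖m ζ z‖ ^ (p - 2) : ℝ) : ℂ)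
            * (starRingEnd ℂ) (Koff ζ z) * Koff ζ z'))) (volume.restrict Ω) :=
        hGint.sub hcon
      apply hnot
      have he : (fun ζ => (((‖m ζ z‖ ^ (p - 2) : ℝ) : ℂ)
          * (starRingEnd ℂ) (Koff ζ z) * Koff ζ z)
          - ((((‖m ζ z‖ ^ (p - 2) : ℝ) : ℂ)
            * (starRingEnd ℂ) (Koff ζ z) * Koff ζ z)
            - (((‖m ζ z‖ ^ (p - 2) : ℝ) : ℂ)
            * (starRingEnd ℂ) (Koff ζ z) * Koff ζ z')))
          = fun ζ => ((‖m ζ z‖ ^ (p - 2) : ℝ) : ℂ)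
            * (starRingEnd ℂ) (Koff ζ z) * Koff ζ z' := funext fun ζ => by ring
      rwa [he] at h2
    have h1 : Koff z z - Koff z z' = 0 := by rw [hrepD, integral_undef hnot2]
    rw [hKzz, h0, sub_zero] at h1
    exact (ne_of_gt hKz) (by exact_mod_cast h1)
  have hQint : Integrable (fun ζ => ((‖m ζ z'‖ ^ (p - 2) : ℝ) : ℂ)
      * (starRingEnd ℂ) (Koff ζ z') * Koff ζ z) (volume.restrict Ω) := by
    by_contra hnot
    have h0 : Koff z' z = 0 := by rw [hrepQ, integral_undef hnot]
    have hsub : (fun ζ => ((‖m ζ z'‖ ^ (p - 2) : ℝ) : ℂ)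
        * (starRingEnd ℂ) (Koff ζ z') * (Koff ζ z - Koff ζ z'))
        = fun ζ => (((‖m ζ z'‖ ^ (p - 2) : ℝ) : ℂ)
          * (starRingEnd ℂ) (Koff ζ z') * Koff ζ z)
          - (((‖m ζ z'‖ ^ (p - 2) : ℝ) : ℂ)
          * (starRingEnd ℂ) (Koff ζ z') * Koff ζ z') := funext fun ζ => by ring
    have hnot2 : ¬ Integrable (fun ζ => ((‖m ζ z'‖ ^ (p - 2) : ℝ) : ℂ)
        * (starRingEnd ℂ) (Koff ζ z') * (Koff ζ z - Koff ζ z')) (volume.restrict Ω) := by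
      intro hcon
      rw [hsub] at hcon
      have h2 : Integrable (fun ζ => ((((‖m ζ z'‖ ^ (p - 2) : ℝ) : ℂ)
          * (starRingEnd ℂ) (Koff ζ z') * Koff ζ z)
          - (((‖m ζ z'‖ ^ (p - 2) : ℝ) : ℂ)
            * (starRingEnd ℂ) (Koff ζ z') * Koff ζ z'))
          + (((‖m ζ z'‖ ^ (p - 2) : ℝ) : ℂ)
            * (starRingEnd ℂ) (Koff ζ z') * Koff ζ z')) (volume.restrict Ω) :=
        hcon.add hG'int
      apply hnot
      have he : (fun ζ => ((((‖m ζ z'‖ ^ (p - 2) : ℝ) : ℂ)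
          * (starRingEnd ℂ) (Koff ζ z') * Koff ζ z)
          - (((‖m ζ z'‖ ^ (p - 2) : ℝ) : ℂ)
            * (starRingEnd ℂ) (Koff ζ z') * Koff ζ z'))
          + (((‖m ζ z'‖ ^ (p - 2) : ℝ) : ℂ)
            * (starRingEnd ℂ) (Koff ζ z') * Koff ζ z'))
          = fun ζ => ((‖m ζ z'‖ ^ (p - 2) : ℝ) : ℂ)
            * (starRingEnd ℂ) (Koff ζ z') * Koff ζ z := funext fun ζ => by ring
      rwa [he] at h2
    have h1 : Koff z' z - Koff z' z' = 0 := by rw [hrepD', integral_undef hnot2]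
    rw [hKz'z', h0, zero_sub, neg_eq_zero] at h1
    exact (ne_of_gt hKz') (by exact_mod_cast h1)
  -- the real-part identities
  have hPre : ∀ ζ, Kd z ^ (p-2) * ((((‖m ζ z‖ ^ (p - 2) : ℝ)) : ℂ)
      * (starRingEnd ℂ) (Koff ζ z) * Koff ζ z').re
      = ‖Koff ζ z‖ ^ (p-2) * ((starRingEnd ℂ) (Koff ζ z) * Koff ζ z').re := by
    intro ζ
    rw [mul_assoc, show ((((‖m ζ z‖ ^ (p - 2) : ℝ)) : ℂ)
      * ((starRingEnd ℂ) (Koff ζ z) * Koff ζ z')).re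
      = ‖m ζ z‖ ^ (p-2) * ((starRingEnd ℂ) (Koff ζ z) * Koff ζ z').re from by simp,
      habsb ζ, Real.mul_rpow (norm_nonneg _) hKz.le]
    ring
  have hQre : ∀ ζ, Kd z' ^ (p-2) * ((((‖m ζ z'‖ ^ (p - 2) : ℝ)) : ℂ)
      * (starRingEnd ℂ) (Koff ζ z') * Koff ζ z).re
      = ‖Koff ζ z'‖ ^ (p-2) * ((starRingEnd ℂ) (Koff ζ z) * Koff ζ z').re := by
    intro ζ
    have hswap : ((starRingEnd ℂ) (Koff ζ z') * Koff ζ z).re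
        = ((starRingEnd ℂ) (Koff ζ z) * Koff ζ z').re := by
      rw [← Complex.conj_re ((starRingEnd ℂ) (Koff ζ z) * Koff ζ z')]; simp [mul_comm]
    rw [mul_assoc, show ((((‖m ζ z'‖ ^ (p - 2) : ℝ)) : ℂ)
      * ((starRingEnd ℂ) (Koff ζ z') * Koff ζ z)).re
      = ‖m ζ z'‖ ^ (p-2) * ((starRingEnd ℂ) (Koff ζ z') * Koff ζ z).re from by simp,
      hswap, habsa ζ, Real.mul_rpow (norm_nonneg _) hKz'.le]
    ring
  -- values of the diagonal integrals
  have hIB : (∫ ζ in Ω, ‖Koff ζ z‖ ^ p) = Kd z ^ (p-1) := by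
    have h : (fun ζ => ‖Koff ζ z‖ ^ p)
        = fun ζ => Kd z ^ p * ‖m ζ z‖ ^ p := funext fun ζ => by
      rw [habsb ζ, Real.mul_rpow (norm_nonneg _) hKz.le]; ring
    rw [h, integral_const_mul]
    have h2 := hKdval z hz
    have h3 : (∫ ζ in Ω, ‖m ζ z‖ ^ p) = (Kd z)⁻¹ := by
      field_simp
      linarith [h2]
    rw [h3, Real.rpow_sub hKz, Real.rpow_one, div_eq_mul_inv]
  have hIA : (∫ ζ in Ω, ‖Koff ζ z'‖ ^ p) = Kd z' ^ (p-1) := by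
    have h : (fun ζ => ‖Koff ζ z'‖ ^ p)
        = fun ζ => Kd z' ^ p * ‖m ζ z'‖ ^ p := funext fun ζ => by
      rw [habsa ζ, Real.mul_rpow (norm_nonneg _) hKz'.le]; ring
    rw [h, integral_const_mul]
    have h2 := hKdval z' hz'
    have h3 : (∫ ζ in Ω, ‖m ζ z'‖ ^ p) = (Kd z')⁻¹ := by
      field_simp
      linarith [h2]
    rw [h3, Real.rpow_sub hKz', Real.rpow_one, div_eq_mul_inv]
  -- apply the abstract lemma
  have hmain := aux_main (volume.restrict Ω) hp (fun ζ => Koff ζ z) (fun ζ => Koff ζ z')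
    (hintK z hz) (hintK z' hz') hint2
    (fun ζ => ((‖m ζ z‖ ^ (p - 2) : ℝ) : ℂ)
      * (starRingEnd ℂ) (Koff ζ z) * Koff ζ z')
    (fun ζ => ((‖m ζ z'‖ ^ (p - 2) : ℝ) : ℂ)
      * (starRingEnd ℂ) (Koff ζ z') * Koff ζ z)
    (Kd z ^ (p-2)) (Kd z' ^ (p-2)) hPint hQint hPre hQre
  beta_reduce at hmain
  rw [hIB, hIA, ← hrepP, ← hrepQ] at hmain
  refine le_trans hmain (le_of_eq ?_)
  congr 1
  have hre : (((Kd z ^ (p - 2) : ℝ) : ℂ) * Koff z z'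
      + ((Kd z' ^ (p - 2) : ℝ) : ℂ) * Koff z' z).re
      = Kd z ^ (p-2) * (Koff z z').re + Kd z' ^ (p-2) * (Koff z' z).re := by
    simp [Complex.add_re]
  rw [hre]
end
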